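/- arXiv:math/0408393 — 10 statements merged into one kernel-verified Lean document; each statement's English description precedes it below -/
import Mathlib

section
/- Let p be a prime and let G be a finitely generated nilpotent group. If G is conjugacy F_p-separable, then the torsion subgroup τ(G) is a p-group and the quotient group G/τ(G) is abelian. -/
open scoped commutatorElement

/-- `G` is conjugacy `F_p`-separable: whenever `a, b ∈ G` are not conjugate in `G`,
there exists a surjective homomorphism `φ` of `G` onto some finite `p`-group `X`
such that `φ a` and `φ b` are not conjugate in `X`. -/
def IsConjFpSeparable (p : ℕ) (G : Type) [Group G] : Prop :=
  ∀ a b : G, ¬ IsConj a b →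
    ∃ (X : Type) (_ : Group X) (_ : Fintype X),
      IsPGroup p X ∧
      ∃ φ : G →* X, Function.Surjective φ ∧ ¬ IsConj (φ a) (φ b)

section Helpers

variable {G : Type} [Group G]

private lemma comm_mul_left' (g h x : G) : ⁅g * h, x⁆ = g * ⁅h, x⁆ * g⁻¹ * ⁅g, x⁆ := by
  simp only [commutatorElement_def]; group

private lemma comm_mul_right' (u g h : G) : ⁅u, g * h⁆ = ⁅u, g⁆ * (g * ⁅u, h⁆ * g⁻¹) := by
  simp only [commutatorElement_def]; group

private lemma comm_inv_left' (g x : G) : ⁅g⁻¹, x⁆ = g⁻¹ * ⁅g, x⁆⁻¹ * g := by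
  simp only [commutatorElement_def]; group

private lemma comm_inv_right' (u g : G) : ⁅u, g⁻¹⁆ = g⁻¹ * ⁅u, g⁆⁻¹ * g := by
  simp only [commutatorElement_def]; group

private lemma conj_eq_comm_mul (g x : G) : g * x * g⁻¹ = ⁅g, x⁆ * x := by
  simp only [commutatorElement_def]; group

private lemma conj_self_of_commute {x z : G} (h : Commute z x) : x * z * x⁻¹ = z :=
  mul_inv_eq_iff_eq_mul.mpr h.symm.eq

private lemma conj_self_of_commute' {x z : G} (h : Commute z x) : x⁻¹ * z * x = z := by
  have := conj_self_of_commute (x := x⁻¹) (h.inv_right)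
  rwa [inv_inv] at this

end Helpers

private lemma lcs_succ_comm (G : Type) [Group G] (n : ℕ) :
    Subgroup.lowerCentralSeries (⊤ : Subgroup G) (n + 1) = ⁅Subgroup.lowerCentralSeries (⊤ : Subgroup G) n, (⊤ : Subgroup G)⁆ := rfl

/-- The torsion-subgroup argument : in the quotient of a f.g. abelian group by its torsion,
Nakayama's lemma yields an element that is not a `q`-th power. -/
private lemma kappa (K : Type) [CommGroup K] [Group.FG K] (q : ℕ) (hq : 2 ≤ q)
    (ξ : K) (hξ : ¬ IsOfFinOrder ξ) : ∃ κ : K, ∀ c : K, κ ≠ c ^ q := by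
  by_contra hcon
  push_neg at hcon
  set T := CommGroup.torsion K with hT
  have hVfg : Group.FG (K ⧸ T) := Group.fg_of_surjective (QuotientGroup.mk'_surjective T)
  have hfin : Module.Finite ℤ (Additive (K ⧸ T)) :=
    Module.Finite.iff_addGroup_fg.mpr (GroupFG.iff_add_fg.mp hVfg)
  have htop : (⊤ : Submodule ℤ (Additive (K ⧸ T))).FG := Module.finite_def.mp hfin
  have hle : (⊤ : Submodule ℤ (Additive (K ⧸ T))) ≤ (Ideal.span {(q : ℤ)}) • ⊤ := by
    intro a _
    obtain ⟨k, hk⟩ := QuotientGroup.mk'_surjective T a.toMul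
    obtain ⟨c, hc⟩ := hcon k
    have ha : a = (q : ℤ) • Additive.ofMul (QuotientGroup.mk' T c) := by
      apply Additive.toMul.injective
      rw [toMul_zsmul]
      rw [toMul_ofMul, ← hk, hc, zpow_natCast, map_pow]
    rw [ha]
    exact Submodule.smul_mem_smul (Ideal.subset_span (Set.mem_singleton _)) trivial
  obtain ⟨r, hr1, hr0⟩ :=
    Submodule.exists_sub_one_mem_and_smul_eq_zero_of_fg_of_le_smul _ ⊤ htop hle
  set v : K ⧸ T := QuotientGroup.mk' T ξ with hv
  have hvr : v ^ r = 1 := by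
    have := hr0 (Additive.ofMul v) trivial
    have h2 := congrArg Additive.toMul this
    rwa [toMul_zsmul, toMul_ofMul, toMul_zero] at h2
  rcases eq_or_ne r 0 with hr | hr
  · rw [hr] at hr1
    have : (q : ℤ) ∣ (0 - 1 : ℤ) := Ideal.mem_span_singleton.mp hr1
    have h1 : (q : ℤ) ∣ 1 := by
      have h0 : (0 - 1 : ℤ) = -1 := by ring
      rw [h0] at this
      exact (dvd_neg).mp this
    have : (q : ℤ) = 1 := Int.eq_one_of_dvd_one (by positivity) h1
    omega
  · have hvfin : IsOfFinOrder v := by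
      have hna : v ^ r.natAbs = 1 := by
        rcases Int.natAbs_eq r with h | h
        · rw [← zpow_natCast, ← h, hvr]
        · have : v ^ (-(r.natAbs : ℤ)) = 1 := by rw [← h, hvr]
          rw [zpow_neg, inv_eq_one, zpow_natCast] at this
          exact this
      exact isOfFinOrder_iff_pow_eq_one.mpr ⟨r.natAbs, Int.natAbs_pos.mpr hr, hna⟩
    have htf := isMulTorsionFree_iff_not_isOfFinOrder.mp
      (inferInstance : IsMulTorsionFree (K ⧸ CommGroup.torsion K))
    rcases eq_or_ne v 1 with hv1 | hv1
    · have : ξ ∈ T := (QuotientGroup.eq_one_iff ξ).mp hv1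
      exact hξ this
    · exact htf hv1 hvfin

private lemma map_lowerCentralSeries_eq {G H : Type} [Group G] [Group H] (f : G →* H)
    (hf : Function.Surjective f) (n : ℕ) :
    (Subgroup.lowerCentralSeries (⊤ : Subgroup G) n).map f = Subgroup.lowerCentralSeries (⊤ : Subgroup H) n := by
  induction n with
  | zero =>
    rw [lowerCentralSeries_zero, lowerCentralSeries_zero, ← MonoidHom.range_eq_map,
      MonoidHom.range_eq_top]
    exact hf
  | succ n ih =>
    rw [lcs_succ_comm, lcs_succ_comm, Subgroup.map_commutator, ih,
      ← MonoidHom.range_eq_map, MonoidHom.range_eq_top.mpr hf]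

/-- In a finitely generated group `G` with `γ_{n+1}(G) = 1`, the subgroup `γ_n(G)` is
finitely generated. -/
private lemma gammaFG : ∀ (n : ℕ) (G : Type) [Group G] [Group.FG G],
    Subgroup.lowerCentralSeries (⊤ : Subgroup G) (n + 1) = ⊥ → (Subgroup.lowerCentralSeries (⊤ : Subgroup G) n).FG := by
  intro n
  induction n with
  | zero =>
    intro G _ _ _
    rw [lowerCentralSeries_zero]
    exact Group.fg_def.mp ‹Group.FG G›
  | succ n ih =>
    intro G _ _ hbot
    set π := QuotientGroup.mk' (Subgroup.lowerCentralSeries (⊤ : Subgroup G) (n + 1)) with hπdef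
    have hπs : Function.Surjective π := QuotientGroup.mk'_surjective _
    set Q := G ⧸ Subgroup.lowerCentralSeries (⊤ : Subgroup G) (n + 1) with hQdef
    have hmap : ∀ m, (Subgroup.lowerCentralSeries (⊤ : Subgroup G) m).map π = Subgroup.lowerCentralSeries (⊤ : Subgroup Q) m := fun m =>
      map_lowerCentralSeries_eq π hπs m
    have hQbot : Subgroup.lowerCentralSeries (⊤ : Subgroup Q) (n + 1) = ⊥ := by
      rw [← hmap (n + 1), Subgroup.map_eq_bot_iff, QuotientGroup.ker_mk']
    have hQfg : (Subgroup.lowerCentralSeries (⊤ : Subgroup Q) n).FG := ih Q hQbot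
    have Central1 : ∀ z ∈ Subgroup.lowerCentralSeries (⊤ : Subgroup G) (n + 1), ∀ g : G, Commute z g := by
      intro z hz g
      have hmem : ⁅z, g⁆ ∈ Subgroup.lowerCentralSeries (⊤ : Subgroup G) (n + 2) := by
        rw [lcs_succ_comm]
        exact Subgroup.commutator_mem_commutator hz (Subgroup.mem_top g)
      rw [hbot, Subgroup.mem_bot] at hmem
      exact commutatorElement_eq_one_iff_commute.mp hmem
    have hcomm_mem : ∀ u ∈ Subgroup.lowerCentralSeries (⊤ : Subgroup G) n, ∀ g : G,
        ⁅u, g⁆ ∈ Subgroup.lowerCentralSeries (⊤ : Subgroup G) (n + 1) := by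
      intro u hu g
      rw [lcs_succ_comm]
      exact Subgroup.commutator_mem_commutator hu (Subgroup.mem_top g)
    obtain ⟨Sb, hSb⟩ := hQfg
    have hlift : ∀ x : Sb, ∃ t, t ∈ Subgroup.lowerCentralSeries (⊤ : Subgroup G) n ∧ π t = (x : Q) := by
      intro x
      have hx : (x : Q) ∈ Subgroup.lowerCentralSeries (⊤ : Subgroup Q) n := by
        rw [← hSb]
        exact Subgroup.subset_closure x.2
      rw [← hmap n] at hx
      obtain ⟨t, ht, hteq⟩ := hx
      exact ⟨t, ht, hteq⟩
    choose t ht1 ht2 using hlift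
    set T : Set G := Set.range t with hTdef
    have hTfin : T.Finite := Set.finite_range t
    have hTC0 : T ⊆ (Subgroup.lowerCentralSeries (⊤ : Subgroup G) n : Set G) := by
      rintro _ ⟨x, rfl⟩; exact ht1 x
    obtain ⟨S, hSclosure, hSfin⟩ := Group.fg_iff.mp ‹Group.FG G›
    set D : Set G := Set.image2 (fun a b => ⁅a, b⁆) T S with hDdef
    have hDfin : D.Finite := hTfin.image2 _ hSfin
    set E := Subgroup.closure D with hEdef
    have hEC1 : E ≤ Subgroup.lowerCentralSeries (⊤ : Subgroup G) (n + 1) := by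
      rw [hEdef, Subgroup.closure_le]
      rintro _ ⟨a, ha, b, _, rfl⟩
      exact hcomm_mem a (hTC0 ha) b
    have hW : ∀ u ∈ Subgroup.lowerCentralSeries (⊤ : Subgroup G) n,
        ∃ w, w ∈ Subgroup.closure T ∧ w⁻¹ * u ∈ Subgroup.lowerCentralSeries (⊤ : Subgroup G) (n + 1) := by
      intro u hu
      have hπu : π u ∈ Subgroup.lowerCentralSeries (⊤ : Subgroup Q) n := by
        rw [← hmap n]; exact ⟨u, hu, rfl⟩
      have himg : Subgroup.map π (Subgroup.closure T) = Subgroup.lowerCentralSeries (⊤ : Subgroup Q) n := by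
        rw [MonoidHom.map_closure, ← hSb]
        congr 1
        ext x
        constructor
        · rintro ⟨_, ⟨i, rfl⟩, rfl⟩; rw [ht2 i]; exact i.2
        · intro hx; exact ⟨t ⟨x, hx⟩, ⟨⟨x, hx⟩, rfl⟩, ht2 ⟨x, hx⟩⟩
      rw [← himg] at hπu
      obtain ⟨w, hw, hweq⟩ := hπu
      refine ⟨w, hw, ?_⟩
      have : π (w⁻¹ * u) = 1 := by rw [map_mul, map_inv, hweq]; group
      rwa [← QuotientGroup.ker_mk' (Subgroup.lowerCentralSeries (⊤ : Subgroup G) (n + 1)), MonoidHom.mem_ker]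
    have claim1 : ∀ s ∈ S, ∀ u ∈ Subgroup.lowerCentralSeries (⊤ : Subgroup G) n, ⁅u, s⁆ ∈ E := by
      intro s hs u hu
      obtain ⟨w, hw, hz⟩ := hW u hu
      have hzs : ⁅w⁻¹ * u, s⁆ = 1 :=
        commutatorElement_eq_one_iff_commute.mpr (Central1 _ hz s)
      have hred : ⁅u, s⁆ = ⁅w, s⁆ := by
        have hu' : u = w * (w⁻¹ * u) := by group
        conv_lhs => rw [hu']
        rw [comm_mul_left', hzs]
        group
      rw [hred]
      have hind : ∀ (w : G), w ∈ Subgroup.closure T →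
          w ∈ Subgroup.lowerCentralSeries (⊤ : Subgroup G) n ∧ ⁅w, s⁆ ∈ E := by
        intro w hw
        refine Subgroup.closure_induction ?_ ?_ ?_ ?_ hw
        · rintro x hx
          exact ⟨hTC0 hx, Subgroup.subset_closure (Set.mem_image2_of_mem hx hs)⟩
        · constructor
          · exact Subgroup.one_mem _
          · have : ⁅(1 : G), s⁆ = 1 := by simp
            rw [this]; exact Subgroup.one_mem _
        · rintro x y hx hy ⟨hxC, hxE⟩ ⟨hyC, hyE⟩
          refine ⟨Subgroup.mul_mem _ hxC hyC, ?_⟩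
          rw [comm_mul_left']
          have hyC1 : ⁅y, s⁆ ∈ Subgroup.lowerCentralSeries (⊤ : Subgroup G) (n + 1) := hcomm_mem y hyC s
          rw [show x * ⁅y, s⁆ * x⁻¹ = ⁅y, s⁆ from conj_self_of_commute (Central1 _ hyC1 x)]
          exact Subgroup.mul_mem _ hyE hxE
        · rintro x hx ⟨hxC, hxE⟩
          refine ⟨Subgroup.inv_mem _ hxC, ?_⟩
          rw [comm_inv_left']
          have hxC1 : ⁅x, s⁆ ∈ Subgroup.lowerCentralSeries (⊤ : Subgroup G) (n + 1) := hcomm_mem x hxC s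
          rw [show x⁻¹ * ⁅x, s⁆⁻¹ * x = ⁅x, s⁆⁻¹ from
            conj_self_of_commute' (Central1 _ hxC1 x |>.inv_left)]
          exact Subgroup.inv_mem _ hxE
      exact (hind w hw).2
    have claim2 : ∀ u ∈ Subgroup.lowerCentralSeries (⊤ : Subgroup G) n, ∀ g : G, ⁅u, g⁆ ∈ E := by
      intro u hu g
      have hg : g ∈ Subgroup.closure S := by rw [hSclosure]; trivial
      refine Subgroup.closure_induction ?_ ?_ ?_ ?_ hg
      · intro s hs; exact claim1 s hs u hu
      · have : ⁅u, (1 : G)⁆ = 1 := by simp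
        rw [this]; exact Subgroup.one_mem _
      · intro x y hx hy hxE hyE
        rw [comm_mul_right']
        have hyC1 : ⁅u, y⁆ ∈ Subgroup.lowerCentralSeries (⊤ : Subgroup G) (n + 1) := hcomm_mem u hu y
        rw [show x * ⁅u, y⁆ * x⁻¹ = ⁅u, y⁆ from conj_self_of_commute (Central1 _ hyC1 x)]
        exact Subgroup.mul_mem _ hxE hyE
      · intro x hx hxE
        rw [comm_inv_right']
        have hxC1 : ⁅u, x⁆ ∈ Subgroup.lowerCentralSeries (⊤ : Subgroup G) (n + 1) := hcomm_mem u hu x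
        rw [show x⁻¹ * ⁅u, x⁆⁻¹ * x = ⁅u, x⁆⁻¹ from
          conj_self_of_commute' ((Central1 _ hxC1 x).inv_left)]
        exact Subgroup.inv_mem _ hxE
    have hC1E : Subgroup.lowerCentralSeries (⊤ : Subgroup G) (n + 1) = E := by
      apply le_antisymm _ hEC1
      rw [lcs_succ_comm]
      exact Subgroup.commutator_le.mpr fun g1 h1 g2 _ => claim2 g1 h1 g2
    refine (Subgroup.fg_iff _).mpr ⟨D, ?_, hDfin⟩
    rw [← hEdef, hC1E]

/-- Conjugacy `F_p`-separability descends to quotients by finite normal subgroups. -/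
private lemma descent (p : ℕ) {G : Type} [Group G] (C : Subgroup G) [C.Normal] [Finite C]
    (h : IsConjFpSeparable p G) : IsConjFpSeparable p (G ⧸ C) := by
  classical
  intro abar bbar hnc
  obtain ⟨a, rfl⟩ := QuotientGroup.mk'_surjective C abar
  obtain ⟨b, rfl⟩ := QuotientGroup.mk'_surjective C bbar
  have hpair : ∀ c : C, ¬ IsConj a (b * (c : G)) := by
    intro c hc
    apply hnc
    obtain ⟨u, hu⟩ := isConj_iff.mp hc
    refine isConj_iff.mpr ⟨QuotientGroup.mk' C u, ?_⟩
    have hc1 : (QuotientGroup.mk' C) (c : G) = 1 := (QuotientGroup.eq_one_iff _).mpr c.2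
    rw [← map_inv, ← map_mul, ← map_mul, hu, map_mul, hc1, mul_one]
  have hsep : ∀ c : C, ∃ (X : Type) (_ : Group X) (_ : Fintype X), IsPGroup p X ∧
      ∃ φ : G →* X, Function.Surjective φ ∧ ¬ IsConj (φ a) (φ (b * c)) := fun c =>
    h a (b * c) (hpair c)
  choose X gX fX hpX φ hφs hφn using hsep
  letI : ∀ c : C, Group (X c) := gX
  letI : ∀ c : C, Fintype (X c) := fX
  letI : Fintype C := Fintype.ofFinite C
  let Φ : G →* (∀ c : C, X c) :=
    { toFun := fun g c => φ c g
      map_one' := by funext c; simp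
      map_mul' := by intro x y; funext c; simp }
  have hP : IsPGroup p (∀ c : C, X c) := by
    intro f
    have hfc : ∀ c : C, ∃ k, (f c) ^ p ^ k = 1 := fun c => hpX c (f c)
    choose k hk using hfc
    refine ⟨Finset.univ.sup k, ?_⟩
    funext c
    have hle : k c ≤ Finset.univ.sup k := Finset.le_sup (Finset.mem_univ c)
    have hpt : (f ^ p ^ Finset.univ.sup k) c = (f c) ^ p ^ Finset.univ.sup k := rfl
    rw [Pi.one_apply, hpt, ← Nat.add_sub_cancel' hle, pow_add, pow_mul, hk c, one_pow]
  set Φr := Φ.rangeRestrict with hΦr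
  have hΦrs : Function.Surjective Φr := Φ.rangeRestrict_surjective
  set N : Subgroup Φ.range := Subgroup.map Φr C with hN
  haveI : N.Normal := Subgroup.Normal.map inferInstance Φr hΦrs
  set ψhat : G →* (Φ.range ⧸ N) := (QuotientGroup.mk' N).comp Φr with hψhat
  have hψhats : Function.Surjective ψhat :=
    (QuotientGroup.mk'_surjective N).comp hΦrs
  have hker : C ≤ ψhat.ker := by
    intro c hc
    rw [MonoidHom.mem_ker]
    show (QuotientGroup.mk' N) (Φr c) = 1
    exact (QuotientGroup.eq_one_iff _).mpr ⟨c, hc, rfl⟩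
  set ψ : (G ⧸ C) →* (Φ.range ⧸ N) := QuotientGroup.lift C ψhat hker with hψ
  have hψmk : ∀ g : G, ψ (QuotientGroup.mk' C g) = ψhat g := fun g => rfl
  refine ⟨Φ.range ⧸ N, inferInstance, Fintype.ofFinite _, (hP.to_subgroup Φ.range).to_quotient N,
    ψ, ?_, ?_⟩
  · intro x
    obtain ⟨g, hg⟩ := hψhats x
    exact ⟨QuotientGroup.mk' C g, hg⟩
  · intro hcj
    rw [hψmk a, hψmk b] at hcj
    obtain ⟨u, hu⟩ := isConj_iff.mp hcj
    obtain ⟨r, rfl⟩ := QuotientGroup.mk'_surjective N u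
    obtain ⟨g₀, rfl⟩ := hΦrs r
    have hmem : (Φr g₀ * Φr a * (Φr g₀)⁻¹)⁻¹ * Φr b ∈ N := by
      rw [← QuotientGroup.eq]
      calc (QuotientGroup.mk (Φr g₀ * Φr a * (Φr g₀)⁻¹) : Φ.range ⧸ N)
          = QuotientGroup.mk' N (Φr g₀) * ψhat a * (QuotientGroup.mk' N (Φr g₀))⁻¹ := by
            simp [ψhat, MonoidHom.comp_apply]
        _ = ψhat b := hu
        _ = QuotientGroup.mk (Φr b) := rfl
    obtain ⟨c₀, hc₀C, hc₀⟩ := hmem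
    set c₁ : C := ⟨c₀, hc₀C⟩⁻¹ with hc₁
    apply hφn c₁
    have heq : Φr (g₀ * a * g₀⁻¹) = Φr (b * (c₁ : G)) := by
      have h1 : Φr g₀ * Φr a * (Φr g₀)⁻¹ * Φr c₀ = Φr b := by
        rw [hc₀]
        group
      simp only [map_mul, map_inv]
      calc Φr g₀ * Φr a * (Φr g₀)⁻¹
          = Φr b * (Φr c₀)⁻¹ := by rw [← h1]; group
        _ = Φr b * Φr (c₁ : G) := by rw [hc₁]; simp
    have heval := congrArg (fun (z : Φ.range) => (z : ∀ c : C, X c) c₁) heq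
    simp only [hΦr, MonoidHom.coe_rangeRestrict] at heval
    have hx : φ c₁ (g₀ * a * g₀⁻¹) = φ c₁ (b * (c₁ : G)) := heval
    rw [map_mul, map_mul, map_inv] at hx
    exact isConj_iff.mpr ⟨φ c₁ g₀, hx⟩

/-- The key construction: if some element `x` has all its commutators in a central subgroup `C`,
and one such commutator has infinite order, then `G` is not conjugacy `F_p`-separable. -/
private lemma caseI (p : ℕ) (hp : p.Prime) {G : Type} [Group G] [Group.FG G]
    (C : Subgroup G)
    (hcent : ∀ z ∈ C, ∀ g : G, Commute z g)
    (x : G) (hxC : ∀ g : G, ⁅g, x⁆ ∈ C)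
    (w₀ : G) (hw₀ : ¬ IsOfFinOrder ⁅w₀, x⁆)
    (h : IsConjFpSeparable p G) : False := by
  classical
  obtain ⟨q, hqge, hq⟩ := Nat.exists_infinite_primes (p + 1)
  have hqp : q ≠ p := ne_of_gt (lt_of_lt_of_le (Nat.lt_succ_self p) hqge)
  have hq2 : 2 ≤ q := hq.two_le
  set F : G →* G := MonoidHom.mk' (fun g => ⁅g, x⁆) (by
    intro g g'
    show ⁅g * g', x⁆ = ⁅g, x⁆ * ⁅g', x⁆
    rw [comm_mul_left' g g' x,
      conj_self_of_commute (hcent _ (hxC g') g),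
      (hcent _ (hxC g') ⁅g, x⁆).eq]) with hF
  set K := F.range with hK
  have hKC : ∀ y : K, (y : G) ∈ C := by
    rintro ⟨y, g, rfl⟩
    exact hxC g
  letI instCG : CommGroup ↥K :=
    { (inferInstance : Group ↥K) with
      mul_comm := fun a b => Subtype.ext ((hcent _ (hKC a) (b : G)).eq) }
  letI instFG : Group.FG ↥K := Group.fg_range F
  set ξ : ↥K := ⟨⁅w₀, x⁆, ⟨w₀, rfl⟩⟩ with hξdef
  have hξ : ¬ IsOfFinOrder ξ := by
    intro hfin
    apply hw₀
    obtain ⟨n, hn, hpow⟩ := isOfFinOrder_iff_pow_eq_one.mp hfin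
    refine isOfFinOrder_iff_pow_eq_one.mpr ⟨n, hn, ?_⟩
    have := congrArg (Subtype.val) hpow
    simpa using this
  obtain ⟨κ, hκ⟩ := kappa ↥K q hq2 ξ hξ
  obtain ⟨w₁, hw₁⟩ := κ.2
  set κ' : G := (κ : G) with hκ'
  have hxq : ∀ g : G, g * x ^ q * g⁻¹ = ⁅g, x⁆ ^ q * x ^ q := by
    intro g
    have h1 : g * x ^ q * g⁻¹ = (g * x * g⁻¹) ^ q := (conj_pow).symm
    rw [h1, conj_eq_comm_mul, (hcent _ (hxC g) x).mul_pow]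
  have claimA : ¬ IsConj (x ^ q) (κ' * x ^ q) := by
    intro hcj
    obtain ⟨u, hu⟩ := isConj_iff.mp hcj
    rw [hxq u] at hu
    have : ⁅u, x⁆ ^ q = κ' := mul_right_cancel hu
    exact hκ ⟨⁅u, x⁆, ⟨u, rfl⟩⟩ (Subtype.ext (by simpa using this.symm))
  obtain ⟨X, instX, instXF, hpX, φ, hφs, hφn⟩ := h (x ^ q) (κ' * x ^ q) claimA
  apply hφn
  set d := orderOf (φ κ') with hd
  obtain ⟨k, hk⟩ := hpX (φ κ')
  have hddvd : d ∣ p ^ k := orderOf_dvd_of_pow_eq_one hk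
  have hcop : Nat.Coprime q d :=
    Nat.Coprime.coprime_dvd_right hddvd
      (Nat.Coprime.pow_right k ((Nat.coprime_primes hq hp).mpr hqp))
  obtain ⟨uz, vz, huv⟩ := hcop.isCoprime
  refine isConj_iff.mpr ⟨φ (w₁ ^ uz), ?_⟩
  have hG : w₁ ^ uz * x ^ q * (w₁ ^ uz)⁻¹ = (κ' ^ uz) ^ q * x ^ q := by
    rw [hxq (w₁ ^ uz)]
    congr 1
    have hzz : ⁅w₁ ^ uz, x⁆ = F (w₁ ^ uz) := rfl
    rw [hzz, map_zpow, hw₁]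
  have hstep : φ (w₁ ^ uz) * φ (x ^ q) * (φ (w₁ ^ uz))⁻¹ = φ ((κ' ^ uz) ^ q) * φ (x ^ q) := by
    rw [← map_inv, ← map_mul, ← map_mul, hG, map_mul]
  rw [hstep]
  have hκq : φ ((κ' ^ uz) ^ q) = φ κ' := by
    rw [map_pow, map_zpow]
    rw [← zpow_natCast ((φ κ') ^ uz) q, ← zpow_mul]
    have huvq : uz * (q : ℤ) = 1 - vz * (d : ℤ) := by linarith [huv]
    rw [huvq, zpow_sub, zpow_one, mul_comm vz (d : ℤ), zpow_mul]
    have hone : (φ κ') ^ (d : ℤ) = 1 := by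
      rw [zpow_natCast, hd, pow_orderOf_eq_one]
    rw [hone]; group
  rw [hκq, ← map_mul]

/-- Main induction : in a f.g. nilpotent conjugacy `F_p`-separable group, all commutators
have finite order. -/
private lemma main_induction (p : ℕ) (hp : p.Prime) :
    ∀ (n : ℕ) (G : Type) [Group G] [Group.FG G],
      Subgroup.lowerCentralSeries (⊤ : Subgroup G) n = ⊥ → IsConjFpSeparable p G →
      ∀ g₁ g₂ : G, IsOfFinOrder ⁅g₁, g₂⁆ := by
  intro n
  induction n with
  | zero =>
    intro G _ _ hbot h g₁ g₂
    have hmem : ⁅g₁, g₂⁆ ∈ (⊥ : Subgroup G) := by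
      rw [← hbot, lowerCentralSeries_zero]; trivial
    rw [Subgroup.mem_bot] at hmem
    rw [hmem]
    exact IsOfFinOrder.one
  | succ n ih =>
    intro G _ _ hbot h g₁ g₂
    rcases Nat.eq_zero_or_pos n with hn | hn
    · subst hn
      have hmem : ⁅g₁, g₂⁆ ∈ Subgroup.lowerCentralSeries (⊤ : Subgroup G) 1 := by
        rw [lcs_succ_comm]
        exact Subgroup.commutator_mem_commutator (by trivial : g₁ ∈ Subgroup.lowerCentralSeries (⊤ : Subgroup G) 0)
          (Subgroup.mem_top g₂)
      rw [hbot, Subgroup.mem_bot] at hmem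
      rw [hmem]
      exact IsOfFinOrder.one
    · obtain ⟨m, rfl⟩ : ∃ m, n = m + 1 := ⟨n - 1, by omega⟩
      have hcent : ∀ z ∈ Subgroup.lowerCentralSeries (⊤ : Subgroup G) (m + 1), ∀ g : G, Commute z g := by
        intro z hz g
        have hmem : ⁅z, g⁆ ∈ Subgroup.lowerCentralSeries (⊤ : Subgroup G) (m + 2) := by
          rw [lcs_succ_comm]
          exact Subgroup.commutator_mem_commutator hz (Subgroup.mem_top g)
        rw [hbot, Subgroup.mem_bot] at hmem
        exact commutatorElement_eq_one_iff_commute.mp hmem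
      by_cases hC : ∀ u ∈ Subgroup.lowerCentralSeries (⊤ : Subgroup G) (m + 1), IsOfFinOrder u
      · -- case (ii): the last nontrivial term is torsion, hence finite; quotient by it
        have hCfg : (Subgroup.lowerCentralSeries (⊤ : Subgroup G) (m + 1)).FG := gammaFG (m + 1) G hbot
        haveI hCfg' : Group.FG ↥(Subgroup.lowerCentralSeries (⊤ : Subgroup G) (m + 1)) :=
          (Group.fg_iff_subgroup_fg _).mpr hCfg
        letI : CommGroup ↥(Subgroup.lowerCentralSeries (⊤ : Subgroup G) (m + 1)) :=
          { (inferInstance : Group ↥(Subgroup.lowerCentralSeries (⊤ : Subgroup G) (m + 1))) with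
            mul_comm := fun a b => Subtype.ext ((hcent _ a.2 (b : G)).eq) }
        have htors : Monoid.IsTorsion ↥(Subgroup.lowerCentralSeries (⊤ : Subgroup G) (m + 1)) := by
          intro u
          obtain ⟨nn, hnn, hpow⟩ := isOfFinOrder_iff_pow_eq_one.mp (hC _ u.2)
          refine isOfFinOrder_iff_pow_eq_one.mpr ⟨nn, hnn, ?_⟩
          ext
          exact hpow
        haveI hfinC : Finite ↥(Subgroup.lowerCentralSeries (⊤ : Subgroup G) (m + 1)) :=
          CommGroup.finite_of_fg_torsion _ htors
        have hdesc : IsConjFpSeparable p (G ⧸ Subgroup.lowerCentralSeries (⊤ : Subgroup G) (m + 1)) :=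
          descent p _ h
        have hQbot : Subgroup.lowerCentralSeries (⊤ : Subgroup (G ⧸ Subgroup.lowerCentralSeries (⊤ : Subgroup G) (m + 1))) (m + 1) = ⊥ := by
          rw [← map_lowerCentralSeries_eq (QuotientGroup.mk' _)
            (QuotientGroup.mk'_surjective _) (m + 1), Subgroup.map_eq_bot_iff,
            QuotientGroup.ker_mk']
        have hQ := ih (G ⧸ Subgroup.lowerCentralSeries (⊤ : Subgroup G) (m + 1)) hQbot hdesc
          (QuotientGroup.mk' _ g₁) (QuotientGroup.mk' _ g₂)
        rw [← map_commutatorElement] at hQ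
        obtain ⟨nn, hnn, hpow⟩ := isOfFinOrder_iff_pow_eq_one.mp hQ
        rw [← map_pow] at hpow
        have hmem : ⁅g₁, g₂⁆ ^ nn ∈ Subgroup.lowerCentralSeries (⊤ : Subgroup G) (m + 1) :=
          (QuotientGroup.eq_one_iff _).mp hpow
        obtain ⟨mm, hmm, hpow2⟩ := isOfFinOrder_iff_pow_eq_one.mp (hC _ hmem)
        refine isOfFinOrder_iff_pow_eq_one.mpr ⟨nn * mm, by positivity, ?_⟩
        rw [pow_mul]
        exact hpow2
      · -- case (i): a commutator of infinite order deep in the series — contradiction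
        push_neg at hC
        obtain ⟨u, huC, hufin⟩ := hC
        set Tsub : Subgroup G :=
          { carrier := {g | g ∈ Subgroup.lowerCentralSeries (⊤ : Subgroup G) (m + 1) ∧ IsOfFinOrder g}
            one_mem' := ⟨Subgroup.one_mem _, IsOfFinOrder.one⟩
            mul_mem' := by
              rintro a b ⟨haC, haf⟩ ⟨hbC, hbf⟩
              exact ⟨Subgroup.mul_mem _ haC hbC,
                Commute.isOfFinOrder_mul (hcent _ haC b) haf hbf⟩
            inv_mem' := by
              rintro a ⟨haC, haf⟩
              exact ⟨Subgroup.inv_mem _ haC, haf.inv⟩ } with hTsub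
        have hnotle : ¬ (Subgroup.lowerCentralSeries (⊤ : Subgroup G) (m + 1) ≤ Tsub) := fun hle =>
          hufin (hle huC).2
        have hnotle2 : ¬ (⁅Subgroup.lowerCentralSeries (⊤ : Subgroup G) m, (⊤ : Subgroup G)⁆ ≤ Tsub) := by
          rw [← lcs_succ_comm]; exact hnotle
        rw [Subgroup.commutator_le] at hnotle2
        push_neg at hnotle2
        obtain ⟨x, hxγ, w₀, -, hxw⟩ := hnotle2
        have hxwC : ⁅x, w₀⁆ ∈ Subgroup.lowerCentralSeries (⊤ : Subgroup G) (m + 1) := by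
          rw [lcs_succ_comm]
          exact Subgroup.commutator_mem_commutator hxγ (Subgroup.mem_top w₀)
        have hnt : ¬ IsOfFinOrder ⁅x, w₀⁆ := fun hf => hxw ⟨hxwC, hf⟩
        have hnt' : ¬ IsOfFinOrder ⁅w₀, x⁆ := by
          intro hf
          apply hnt
          rw [← commutatorElement_inv]
          exact hf.inv
        have hxC : ∀ g : G, ⁅g, x⁆ ∈ Subgroup.lowerCentralSeries (⊤ : Subgroup G) (m + 1) := by
          intro g
          have hmem : ⁅x, g⁆ ∈ Subgroup.lowerCentralSeries (⊤ : Subgroup G) (m + 1) := by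
            rw [lcs_succ_comm]
            exact Subgroup.commutator_mem_commutator hxγ (Subgroup.mem_top g)
          rw [← commutatorElement_inv]
          exact Subgroup.inv_mem _ hmem
        exact (caseI p hp (Subgroup.lowerCentralSeries (⊤ : Subgroup G) (m + 1)) hcent x hxC w₀ hnt' h).elim

private lemma part1 (p : ℕ) (hp : p.Prime) (G : Type) [Group G]
    (τ : Subgroup G) (hτ : ∀ g : G, g ∈ τ ↔ IsOfFinOrder g)
    (h : IsConjFpSeparable p G) : IsPGroup p τ := by
  intro g
  have hfin : IsOfFinOrder (g : G) := (hτ _).mp g.2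
  set n := orderOf (g : G) with hn
  have hn0 : n ≠ 0 := hfin.orderOf_pos.ne'
  have key : ∀ {r : ℕ}, r.Prime → r ∣ n → r = p := by
    intro r hr hrn
    by_contra hrp
    set y := (g : G) ^ (n / r) with hy
    have hy1 : y ≠ 1 := by
      intro hy1
      have hdvd : n ∣ n / r := orderOf_dvd_of_pow_eq_one hy1
      have h1 : n / r < n := Nat.div_lt_self (Nat.pos_of_ne_zero hn0) hr.one_lt
      have h2 : 0 < n / r := Nat.div_pos (Nat.le_of_dvd (Nat.pos_of_ne_zero hn0) hrn) hr.pos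
      exact absurd (Nat.le_of_dvd h2 hdvd) (not_le.mpr h1)
    have hyr : y ^ r = 1 := by
      rw [hy, ← pow_mul, Nat.div_mul_cancel hrn, hn]; exact pow_orderOf_eq_one _
    have hnc : ¬ IsConj y (1 : G) := by
      intro hc
      obtain ⟨c, hc⟩ := isConj_iff.mp hc
      apply hy1
      have hyy : y = c⁻¹ * 1 * c := by rw [← hc]; group
      simpa using hyy
    obtain ⟨X, _, _, hpX, φ, hsurj, hsep⟩ := h y 1 hnc
    have hφy : φ y ≠ 1 := by
      intro h1
      exact hsep (by rw [h1, map_one])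
    obtain ⟨k, hk⟩ := hpX (φ y)
    have h1 : orderOf (φ y) ∣ r := orderOf_dvd_of_pow_eq_one (by rw [← map_pow, hyr, map_one])
    have h2 : orderOf (φ y) ∣ p ^ k := orderOf_dvd_of_pow_eq_one hk
    have hcop : Nat.Coprime r (p ^ k) :=
      Nat.Coprime.pow_right _ ((Nat.coprime_primes hr hp).mpr hrp)
    have hord1 : orderOf (φ y) = 1 := Nat.eq_one_of_dvd_coprimes hcop h1 h2
    exact hφy (orderOf_eq_one_iff.mp hord1)
  have hpow : n = p ^ n.primeFactorsList.length :=
    Nat.eq_prime_pow_of_unique_prime_dvd hn0 key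
  refine ⟨n.primeFactorsList.length, ?_⟩
  have hgp : (g : G) ^ p ^ n.primeFactorsList.length = 1 := by
    rw [← hpow, hn]; exact pow_orderOf_eq_one _
  ext
  simpa using hgp

/-- Let `p` be a prime and `G` a finitely generated nilpotent group, with torsion
subgroup `τ`. If `G` is conjugacy `F_p`-separable, then `τ` is a `p`-group and
`G ⧸ τ` is abelian. -/
theorem torsion_isPGroup_and_quotient_comm_of_conjFpSeparable
    (p : ℕ) (hp : p.Prime) (G : Type) [Group G] [Group.FG G] [Group.IsNilpotent G]
    (τ : Subgroup G) [τ.Normal] (hτ : ∀ g : G, g ∈ τ ↔ IsOfFinOrder g)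
    (h : IsConjFpSeparable p G) :
    IsPGroup p τ ∧ ∀ x y : G ⧸ τ, x * y = y * x := by
  refine ⟨part1 p hp G τ hτ h, ?_⟩
  obtain ⟨n, hn⟩ := nilpotent_iff_lowerCentralSeries.mp ‹Group.IsNilpotent G›
  have hcomm := main_induction p hp n G hn h
  intro x y
  obtain ⟨g₁, rfl⟩ := QuotientGroup.mk'_surjective τ x
  obtain ⟨g₂, rfl⟩ := QuotientGroup.mk'_surjective τ y
  have hmem : ⁅g₁, g₂⁆ ∈ τ := (hτ _).mpr (hcomm g₁ g₂)
  have h1 : (QuotientGroup.mk' τ) ⁅g₁, g₂⁆ = 1 := (QuotientGroup.eq_one_iff _).mpr hmem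
  rw [map_commutatorElement] at h1
  exact (commutatorElement_eq_one_iff_commute.mp h1).eq
end

section
/- Let p be a prime and let G be a finitely generated torsion-free nilpotent group. Then G is conjugacy F_p-separable if and only if G is abelian. -/
/- ### Auxiliary lemmas -/

/-- Torsion-freeness gives `NoZeroSMulDivisors ℤ`. -/
private lemma auxNZSD {A : Type} [AddCommGroup A]
    (htf : ∀ a : A, a ≠ 0 → ¬ IsOfFinAddOrder a) :
    NoZeroSMulDivisors ℤ A := by
  constructor
  intro c x h
  by_contra hcx
  push_neg at hcx
  obtain ⟨hc, hx⟩ := hcx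
  refine htf x hx (isOfFinAddOrder_iff_nsmul_eq_zero.mpr ⟨c.natAbs, Int.natAbs_pos.mpr hc, ?_⟩)
  have h2 : (c.natAbs : ℤ) • x = 0 := by
    rcases Int.natAbs_eq c with h1 | h1
    · rw [← h1]; exact h
    · rw [← neg_neg ((c.natAbs : ℤ)), ← h1, neg_smul, h, neg_zero]
  simpa using h2

/-- In a nontrivial f.g. torsion-free abelian group, not everything is a `q`-th multiple. -/
private lemma auxNotQ {A : Type} [AddCommGroup A] (hfg : AddGroup.FG A)
    (htf : ∀ a : A, a ≠ 0 → ¬ IsOfFinAddOrder a)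
    (hnt : ∃ a : A, a ≠ 0) {q : ℕ} (hq : q.Prime) : ∃ z : A, ∀ w : A, q • w ≠ z := by
  haveI : Module.Finite ℤ A := Module.Finite.iff_addGroup_fg.mpr hfg
  haveI : NoZeroSMulDivisors ℤ A := auxNZSD htf
  haveI : Module.Free ℤ A := Module.free_of_finite_type_torsion_free'
  haveI : Nontrivial A := ⟨_, _, hnt.choose_spec⟩
  let B := Module.Free.chooseBasis ℤ A
  obtain ⟨i⟩ := B.index_nonempty
  refine ⟨B i, fun w hw => ?_⟩
  have h1 : B.repr (q • w) i = q • (B.repr w i) := by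
    rw [map_nsmul]; rfl
  rw [hw, Module.Basis.repr_self, Finsupp.single_eq_same, nsmul_eq_mul] at h1
  have hdvd : (q : ℤ) ∣ 1 := Dvd.intro _ h1.symm
  have := Int.le_of_dvd one_pos hdvd
  have := hq.two_le
  omega

/-- A f.g. torsion-free abelian group is residually a finite `p`-group. -/
private lemma auxSep {A : Type} [AddCommGroup A] (p : ℕ) (hp : p.Prime) (hfg : AddGroup.FG A)
    (htf : ∀ a : A, a ≠ 0 → ¬ IsOfFinAddOrder a) {a : A} (ha : a ≠ 0) :
    ∃ (X : Type) (_ : AddCommGroup X) (_ : Fintype X),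
      IsPGroup p (Multiplicative X) ∧ ∃ f : A →+ X, Function.Surjective f ∧ f a ≠ 0 := by
  haveI : Module.Finite ℤ A := Module.Finite.iff_addGroup_fg.mpr hfg
  haveI : NoZeroSMulDivisors ℤ A := auxNZSD htf
  haveI : Module.Free ℤ A := Module.free_of_finite_type_torsion_free'
  set ι := Module.Free.ChooseBasisIndex ℤ A with hι
  let B : Module.Basis ι ℤ A := Module.Free.chooseBasis ℤ A
  obtain ⟨i, hi⟩ : ∃ i, B.repr a i ≠ 0 := by
    by_contra h
    push_neg at h
    exact ha ((LinearEquiv.map_eq_zero_iff B.repr).mp (by ext j; exact h j))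
  set n : ℤ := B.repr a i with hn
  set k : ℕ := n.natAbs with hk
  set N : ℕ := p ^ k with hN
  have hNdvd : ¬ ((N : ℤ) ∣ n) := by
    intro hdvd
    have h1 : N ∣ n.natAbs := by
      have := Int.natAbs_dvd_natAbs.mpr hdvd
      simpa using this
    have h2 : N ≤ n.natAbs := Nat.le_of_dvd (Int.natAbs_pos.mpr hi) h1
    have h3 : k < 2 ^ k := Nat.lt_two_pow_self
    have h4 : 2 ^ k ≤ p ^ k := Nat.pow_le_pow_left hp.two_le _
    rw [← hk] at h2
    omega
  haveI : NeZero N := ⟨pow_ne_zero k hp.pos.ne'⟩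
  refine ⟨ι → ZMod N, inferInstance, inferInstance, ?_, ?_⟩
  · intro g
    refine ⟨k, ?_⟩
    apply Multiplicative.toAdd.injective
    rw [toAdd_pow]
    funext j
    show (p ^ k) • (g.toAdd j) = (0 : ZMod N)
    rw [nsmul_eq_mul, ← hN]
    rw [show ((N : ZMod N)) = 0 from ZMod.natCast_self N, zero_mul]
  · refine ⟨AddMonoidHom.mk' (fun x j => ((B.repr x j : ℤ) : ZMod N)) ?_, ?_, ?_⟩
    · intro x y
      funext j
      simp [map_add]
    · intro v
      have hsur : ∀ j, ∃ w : ℤ, ((w : ZMod N)) = v j := fun j => ZMod.intCast_surjective (v j)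
      choose w hw using hsur
      refine ⟨B.repr.symm (Finsupp.equivFunOnFinite.symm w), ?_⟩
      funext j
      show ((B.repr (B.repr.symm (Finsupp.equivFunOnFinite.symm w)) j : ℤ) : ZMod N) = v j
      rw [LinearEquiv.apply_symm_apply]
      rw [show (Finsupp.equivFunOnFinite.symm w) j = w j from rfl]
      exact hw j
    · intro h0
      have h1 : ((n : ZMod N)) = 0 := congrFun h0 i
      exact hNdvd ((ZMod.intCast_zmod_eq_zero_iff_dvd n N).mp h1)

/-- The center of a nontrivial nilpotent group is nontrivial. -/
private lemma auxCenter (G : Type*) [Group G] [Group.IsNilpotent G] [Nontrivial G] :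
    ∃ z : G, z ∈ Subgroup.center G ∧ z ≠ 1 := by
  by_contra hc
  push_neg at hc
  have hbot : ∀ n, Subgroup.upperCentralSeries G n = ⊥ := by
    intro n
    induction n with
    | zero => rfl
    | succ n ih =>
      ext g
      simp only [Subgroup.mem_upperCentralSeries_succ_iff, ih, Subgroup.mem_bot, commutatorElement_def]
      constructor
      · intro hg
        refine hc g (Subgroup.mem_center_iff.mpr fun y => ?_)
        exact (mul_inv_eq_iff_eq_mul.mp (mul_inv_eq_one.mp (hg y))).symm
      · rintro rfl y
        group
  obtain ⟨n, hn⟩ := Group.IsNilpotent.nilpotent G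
  obtain ⟨a, b, hab⟩ := exists_pair_ne G
  apply hab
  have ha : a ∈ (⊥ : Subgroup G) := by rw [← hbot n, hn]; trivial
  have hb : b ∈ (⊥ : Subgroup G) := by rw [← hbot n, hn]; trivial
  rw [Subgroup.mem_bot.mp ha, Subgroup.mem_bot.mp hb]

/-- Let `p` be a prime and `G` a finitely generated torsion-free nilpotent group.
Then `G` is conjugacy `F_p`-separable iff `G` is abelian. -/
theorem conjFpSeparable_iff_comm_of_torsionFree
    (p : ℕ) (hp : p.Prime) (G : Type) [Group G] [Group.FG G] [Group.IsNilpotent G]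
    (htf : ∀ g : G, g ≠ 1 → ¬ IsOfFinOrder g) :
    IsConjFpSeparable p G ↔ ∀ x y : G, x * y = y * x := by
  constructor
  · -- separable → abelian
    intro hsep
    by_contra hnab
    push_neg at hnab
    obtain ⟨x0, y0, hxy0⟩ := hnab
    -- the quotient by the center is a nontrivial nilpotent group
    haveI : Nontrivial (G ⧸ Subgroup.center G) := by
      refine ⟨⟨(x0 : G ⧸ Subgroup.center G), 1, fun h => ?_⟩⟩
      have hx0 : x0 ∈ Subgroup.center G := (QuotientGroup.eq_one_iff x0).mp h
      exact hxy0 (Subgroup.mem_center_iff.mp hx0 y0).symm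
    obtain ⟨zq, hzqc, hzq1⟩ := auxCenter (G ⧸ Subgroup.center G)
    obtain ⟨x, rfl⟩ := QuotientGroup.mk_surjective zq
    have hx1 : x ∉ Subgroup.center G := fun h => hzq1 ((QuotientGroup.eq_one_iff x).mpr h)
    have hxc : ∀ g : G, g * x * g⁻¹ * x⁻¹ ∈ Subgroup.center G := by
      intro g
      rw [← QuotientGroup.eq_one_iff]
      have h1 := Subgroup.mem_center_iff.mp hzqc ((g : G ⧸ Subgroup.center G))
      simp only [QuotientGroup.mk_mul, QuotientGroup.mk_inv]
      rw [h1]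
      group
    -- the commutator homomorphism
    let ψ : G →* G :=
      { toFun := fun g => g * x * g⁻¹ * x⁻¹
        map_one' := by group
        map_mul' := by
          intro g h
          have hch := Subgroup.mem_center_iff.mp (hxc h)
          show (g * h) * x * (g * h)⁻¹ * x⁻¹ = (g * x * g⁻¹ * x⁻¹) * (h * x * h⁻¹ * x⁻¹)
          calc (g * h) * x * (g * h)⁻¹ * x⁻¹
              = g * (h * x * h⁻¹ * x⁻¹) * x * g⁻¹ * x⁻¹ := by group
            _ = (h * x * h⁻¹ * x⁻¹) * g * x * g⁻¹ * x⁻¹ := by rw [hch g]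
            _ = (g * x * g⁻¹ * x⁻¹) * (h * x * h⁻¹ * x⁻¹) := by
                rw [hch (g * x * g⁻¹ * x⁻¹)]; group }
    have hψdef : ∀ g : G, ψ g = g * x * g⁻¹ * x⁻¹ := fun g => rfl
    have hψc : ∀ g : G, ψ g ∈ Subgroup.center G := fun g => hxc g
    set D := ψ.range with hD
    have hDle : D ≤ Subgroup.center G := by
      rintro _ ⟨g, rfl⟩
      exact hψc g
    letI : CommGroup ↥D :=
      { (inferInstance : Group ↥D) with
        mul_comm := fun a b => Subtype.ext (Subgroup.mem_center_iff.mp (hDle b.2) (a : G)) }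
    -- transfer hypotheses to `Additive ↥D`
    have htfD : ∀ w : Additive ↥D, w ≠ 0 → ¬ IsOfFinAddOrder w := by
      intro w hw hfin
      obtain ⟨m, hm, hma⟩ := isOfFinAddOrder_iff_nsmul_eq_zero.mp hfin
      refine htf ((w.toMul : ↥D) : G) ?_ (isOfFinOrder_iff_pow_eq_one.mpr ⟨m, hm, ?_⟩)
      · intro h
        apply hw
        have : (w.toMul : ↥D) = 1 := Subtype.ext h
        exact Additive.toMul.injective this
      · have h1 : (m • w).toMul = w.toMul ^ m := toMul_nsmul m w
        rw [hma] at h1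
        have h2 : (w.toMul : ↥D) ^ m = 1 := h1.symm ▸ rfl
        rw [← SubgroupClass.coe_pow, h2, OneMemClass.coe_one]
    have hntD : ∃ w : Additive ↥D, w ≠ 0 := by
      have : ∃ g : G, ¬ (g * x = x * g) := by
        by_contra hcon
        push_neg at hcon
        exact hx1 (Subgroup.mem_center_iff.mpr fun g => hcon g)
      obtain ⟨g, hg⟩ := this
      refine ⟨Additive.ofMul (⟨ψ g, ⟨g, rfl⟩⟩ : ↥D), ?_⟩
      intro h
      apply hg
      have h1 : (⟨ψ g, ⟨g, rfl⟩⟩ : ↥D) = 1 := Additive.ofMul.injective h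
      have h2 : ψ g = 1 := congrArg Subtype.val h1
      rw [hψdef] at h2
      have := mul_inv_eq_iff_eq_mul.mp (mul_inv_eq_one.mp h2)
      exact this
    -- a prime different from p
    set q : ℕ := if p = 2 then 3 else 2 with hqdef
    have hq : q.Prime := by
      by_cases h : p = 2 <;> simp only [hqdef, h, if_true, if_false] <;> norm_num
    have hqp : q ≠ p := by
      by_cases h : p = 2 <;> simp only [hqdef, h, if_true, if_false] <;> omega
    obtain ⟨zm0, hzm0⟩ := auxNotQ (inferInstance : AddGroup.FG (Additive ↥D)) htfD hntD hq
    set zm : ↥D := zm0.toMul with hzm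
    have hzprop : ∀ w : ↥D, w ^ q ≠ zm := by
      intro w hw
      refine hzm0 (Additive.ofMul w) ?_
      rw [← ofMul_pow, hw, hzm]
      rfl
    set z : G := (zm : G) with hz
    have hzc : z ∈ Subgroup.center G := hDle zm.2
    -- the two non-conjugate elements
    have hψconj : ∀ g : G, g * x ^ q * g⁻¹ = (ψ g) ^ q * x ^ q := by
      intro g
      have h1 : g * x ^ q * g⁻¹ = (g * x * g⁻¹) ^ q := by
        rw [← MulAut.conj_apply, map_pow, MulAut.conj_apply]
      have h2 : g * x * g⁻¹ = ψ g * x := by rw [hψdef]; group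
      have h3 : Commute (ψ g) x := (Subgroup.mem_center_iff.mp (hψc g) x).symm
      rw [h1, h2, h3.mul_pow]
    have hnotconj : ¬ IsConj (x ^ q) (x ^ q * z) := by
      intro hcj
      obtain ⟨g, hg⟩ := isConj_iff.mp hcj
      rw [hψconj g] at hg
      rw [Subgroup.mem_center_iff.mp hzc (x ^ q)] at hg
      have h4 : (ψ g) ^ q = z := mul_right_cancel hg
      refine hzprop ⟨ψ g, ⟨g, rfl⟩⟩ (Subtype.ext ?_)
      calc ((⟨ψ g, ⟨g, rfl⟩⟩ : ↥D) ^ q : ↥D).val = (ψ g) ^ q := by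
            rw [SubgroupClass.coe_pow]
        _ = (zm : G) := h4
    obtain ⟨X, _, _, hpX, φ, hφs, hnc⟩ := hsep _ _ hnotconj
    apply hnc
    set y : X := φ z with hy
    obtain ⟨m, hm⟩ := hpX y
    set e : ℕ := p ^ (m + 1) with he
    have hye : y ^ e = 1 := by rw [he, pow_succ, pow_mul, hm, one_pow]
    have he1 : 1 < e := by
      rw [he]
      exact Nat.one_lt_pow (Nat.succ_ne_zero m) hp.one_lt
    have hqe : Nat.Coprime q e := ((Nat.coprime_primes hq hp).mpr hqp).pow_right _
    obtain ⟨s, -, hs⟩ := Nat.exists_mul_mod_eq_one_of_coprime hqe he1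
    have hys : (y ^ s) ^ q = y := by
      rw [← pow_mul, mul_comm s q]
      conv_lhs => rw [← Nat.div_add_mod (q * s) e]
      rw [pow_add, pow_mul, hye, one_pow, one_mul, hs, pow_one]
    obtain ⟨g0, hg0⟩ := (zm ^ s).2
    have hg0' : ψ g0 = z ^ s := by
      rw [hg0, hz, SubgroupClass.coe_pow]
    refine isConj_iff.mpr ⟨φ g0, ?_⟩
    calc φ g0 * φ (x ^ q) * (φ g0)⁻¹
        = φ (g0 * x ^ q * g0⁻¹) := by rw [map_mul, map_mul, map_inv]
      _ = φ ((ψ g0) ^ q * x ^ q) := by rw [hψconj g0]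
      _ = (φ (ψ g0)) ^ q * φ (x ^ q) := by rw [map_mul, map_pow]
      _ = (y ^ s) ^ q * φ (x ^ q) := by rw [hg0', map_pow, hy]
      _ = φ z * φ (x ^ q) := by rw [hys, hy]
      _ = φ (x ^ q * z) := by
          rw [← map_mul, Subgroup.mem_center_iff.mp hzc (x ^ q)]
  · -- abelian → separable
    intro hcomm a b hnab
    letI : CommGroup G := { (inferInstance : Group G) with mul_comm := hcomm }
    have hab : a ≠ b := fun h => hnab (h ▸ IsConj.refl a)
    have hd : a / b ≠ 1 := div_ne_one.mpr hab
    have htfA : ∀ w : Additive G, w ≠ 0 → ¬ IsOfFinAddOrder w := by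
      intro w hw hfin
      obtain ⟨m, hm, hma⟩ := isOfFinAddOrder_iff_nsmul_eq_zero.mp hfin
      refine htf w.toMul (fun h => hw (Additive.toMul.injective h))
        (isOfFinOrder_iff_pow_eq_one.mpr ⟨m, hm, ?_⟩)
      have h1 : (m • w).toMul = w.toMul ^ m := toMul_nsmul m w
      rw [hma] at h1
      exact h1.symm ▸ rfl
    have haA : Additive.ofMul (a / b) ≠ 0 := fun h => hd (Additive.ofMul.injective h)
    obtain ⟨X0, _, _, hpX, f, hfs, hfa⟩ :=
      auxSep p hp (inferInstance : AddGroup.FG (Additive G)) htfA haA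
    refine ⟨Multiplicative X0, inferInstance, inferInstance, hpX,
      AddMonoidHom.toMultiplicativeRight f, ?_, ?_⟩
    · intro v
      obtain ⟨w, hw⟩ := hfs v.toAdd
      exact ⟨w.toMul, by
        show Multiplicative.ofAdd (f (Additive.ofMul w.toMul)) = v
        simp [hw]⟩
    · intro hcj
      have h1 := isConj_iff_eq.mp hcj
      apply hfa
      have h2 : f (Additive.ofMul a) = f (Additive.ofMul b) := by
        have := congrArg Multiplicative.toAdd h1
        simpa using this
      rw [ofMul_div, map_sub, h2, sub_self]
end

section
/- (Proposition 3) Let p be a prime and let G be a finitely generated torsion-free nilpotent group. If G is conjugacy F_p-separable, then G is abelian. -/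
section Aux

lemma exists_mem_ucs2 (G : Type) [Group G] [Group.IsNilpotent G]
    (hx : ∃ a b : G, a * b ≠ b * a) :
    ∃ x : G, x ∈ Subgroup.upperCentralSeries G 2 ∧ x ∉ Subgroup.center G := by
  by_contra hc
  push_neg at hc
  have key : ∀ n, Subgroup.upperCentralSeries G n ≤ Subgroup.center G := by
    intro n
    induction n with
    | zero => simp [upperCentralSeries_zero]
    | succ n ih =>
      intro w hw
      refine hc w ?_
      rw [mem_upperCentralSeries_succ_iff] at hw ⊢
      intro y
      rw [upperCentralSeries_one]
      exact ih (hw y)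
  obtain ⟨n, hn⟩ := Group.IsNilpotent.nilpotent (G := G)
  obtain ⟨a, b, hab⟩ := hx
  have ha : a ∈ Subgroup.center G := key n (hn ▸ Subgroup.mem_top a)
  exact hab ((Subgroup.mem_center_iff.mp ha b).symm)

lemma exists_prime_not_pow (p : ℕ) (A : Type*) [CommGroup A] [Group.FG A]
    (htf : ∀ g : A, g ≠ 1 → ¬ IsOfFinOrder g) (z : A) (hz : z ≠ 1) :
    ∃ q : ℕ, q.Prime ∧ q ≠ p ∧ ∀ k : A, k ^ q ≠ z := by
  haveI : Module.Finite ℤ (Additive A) := Module.Finite.iff_addGroup_fg.mpr inferInstance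
  haveI : NoZeroSMulDivisors ℤ (Additive A) := by
    constructor
    intro c a hca
    by_contra h'
    push_neg at h'
    obtain ⟨hc, ha⟩ := h'
    set g : A := Additive.toMul a with hg
    have hgc : g ^ c = 1 := by
      have := congrArg Additive.toMul hca
      simpa using this
    have h1 : g ^ c.natAbs = 1 := by
      rcases Int.natAbs_eq c with h | h
      · rw [h] at hgc; exact_mod_cast (zpow_natCast g c.natAbs ▸ hgc)
      · rw [h, zpow_neg, inv_eq_one, zpow_natCast] at hgc; exact hgc
    have hfin : IsOfFinOrder g :=
      isOfFinOrder_iff_pow_eq_one.mpr ⟨c.natAbs, Int.natAbs_pos.mpr hc, h1⟩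
    have hg1 : g ≠ 1 := by
      intro h
      exact ha (congrArg Additive.ofMul h)
    exact htf g hg1 hfin
  let b := Module.Free.chooseBasis ℤ (Additive A)
  set zM : Additive A := Additive.ofMul z with hzMdef
  have hzM : zM ≠ 0 := by
    intro h
    exact hz (congrArg Additive.toMul h)
  have hr : b.repr zM ≠ 0 := by
    intro h
    exact hzM (by simpa using (LinearEquiv.map_eq_zero_iff b.repr).mp h)
  obtain ⟨i, hi⟩ := Finsupp.ne_iff.mp hr
  simp only [Finsupp.coe_zero, Pi.zero_apply] at hi
  set m : ℤ := b.repr zM i with hm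
  obtain ⟨q, hqge, hqp⟩ := Nat.exists_infinite_primes (max p m.natAbs + 2)
  refine ⟨q, hqp, ?_, ?_⟩
  · have : p < q := lt_of_lt_of_le (by omega : p < max p m.natAbs + 2) hqge
    omega
  · intro k hk
    have hsmul : (q : ℤ) • Additive.ofMul k = zM := by
      rw [hzMdef, ← hk, ofMul_pow]
      simp
    have : m = (q : ℤ) * (b.repr (Additive.ofMul k) i) := by
      rw [hm, ← hsmul, map_smul]
      simp
    have hdvd : (q : ℤ) ∣ m := ⟨_, this⟩
    have : q ∣ m.natAbs := by
      have := Int.natAbs_dvd_natAbs.mpr hdvd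
      simpa using this
    have : q ≤ m.natAbs := Nat.le_of_dvd (Int.natAbs_pos.mpr hi) this
    omega

lemma conj_pow' {G : Type*} [Group G] (u x : G) (q : ℕ) :
    (u⁻¹ * x * u) ^ q = u⁻¹ * x ^ q * u := by
  induction q with
  | zero => simp
  | succ n ih => rw [pow_succ, pow_succ, ih]; group

lemma conj_zpow_formula {G : Type*} [Group G] {x y z : G} (hz : ∀ v, Commute z v)
    (hyx : y⁻¹ * x * y = x * z) : ∀ t : ℤ, y ^ (-t) * x * y ^ t = x * z ^ t := by
  have hcen : ∀ (t : ℤ) (v : G), z ^ t * v = v * z ^ t := fun t v => ((hz v).zpow_left t).eq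
  have hyx' : y * x * y⁻¹ = x * z⁻¹ := by
    have h0 : x = y * (x * z) * y⁻¹ := by rw [← hyx]; group
    have h1 : y * (x * z) * y⁻¹ = (y * x * y⁻¹) * z := by
      calc y * (x * z) * y⁻¹ = y * x * (z * y⁻¹) := by group
        _ = y * x * (y⁻¹ * z) := by rw [(hz y⁻¹).eq]
        _ = (y * x * y⁻¹) * z := by group
    rw [h1] at h0
    calc y * x * y⁻¹ = y * x * y⁻¹ * z * z⁻¹ := by group
      _ = x * z⁻¹ := by rw [← h0]
  intro t
  induction t using Int.induction_on with
  | zero => simp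
  | succ t ih =>
    have h1 : y ^ (-((t : ℤ) + 1)) * x * y ^ ((t : ℤ) + 1)
        = y⁻¹ * (y ^ (-(t : ℤ)) * x * y ^ (t : ℤ)) * y := by group
    rw [h1, ih]
    calc y⁻¹ * (x * z ^ (t : ℤ)) * y = y⁻¹ * x * (z ^ (t : ℤ) * y) := by group
      _ = y⁻¹ * x * (y * z ^ (t : ℤ)) := by rw [hcen (t : ℤ) y]
      _ = (y⁻¹ * x * y) * z ^ (t : ℤ) := by group
      _ = x * z * z ^ (t : ℤ) := by rw [hyx]
      _ = x * z ^ ((t : ℤ) + 1) := by rw [mul_assoc, ← hcen, ← zpow_add_one]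
  | pred t ih =>
    have h1 : y ^ (-(-(t : ℤ) - 1)) * x * y ^ (-(t : ℤ) - 1)
        = y * (y ^ (-(-(t : ℤ))) * x * y ^ (-(t : ℤ))) * y⁻¹ := by group
    rw [h1, ih]
    calc y * (x * z ^ (-(t : ℤ))) * y⁻¹ = y * x * (z ^ (-(t : ℤ)) * y⁻¹) := by group
      _ = y * x * (y⁻¹ * z ^ (-(t : ℤ))) := by rw [hcen]
      _ = (y * x * y⁻¹) * z ^ (-(t : ℤ)) := by group
      _ = x * z⁻¹ * z ^ (-(t : ℤ)) := by rw [hyx']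
      _ = x * z ^ (-(t : ℤ) - 1) := by group

end Aux

/-- (Proposition 3) Let `p` be a prime and `G` a finitely generated torsion-free
nilpotent group. If `G` is conjugacy `F_p`-separable, then `G` is abelian. -/
theorem comm_of_conjFpSeparable_of_torsionFree
    (p : ℕ) (hp : p.Prime) (G : Type) [Group G] [Group.FG G] [Group.IsNilpotent G]
    (htf : ∀ g : G, g ≠ 1 → ¬ IsOfFinOrder g)
    (h : IsConjFpSeparable p G) :
    ∀ x y : G, x * y = y * x := by
  intro x₀ y₀
  by_contra hxy
  obtain ⟨x, hx2, hxZ⟩ := exists_mem_ucs2 G ⟨x₀, y₀, hxy⟩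
  -- every commutator of x is central
  have hcZ : ∀ g : G, x⁻¹ * g⁻¹ * x * g ∈ Subgroup.center G := by
    intro g
    have h1 : x * g⁻¹ * x⁻¹ * g⁻¹⁻¹ ∈ Subgroup.upperCentralSeries G 1 :=
      (mem_upperCentralSeries_succ_iff.mp hx2) g⁻¹
    rw [upperCentralSeries_one] at h1
    have h2 : (x * g⁻¹ * x⁻¹ * g⁻¹⁻¹)⁻¹ ∈ Subgroup.center G := Subgroup.inv_mem _ h1
    have hu : g⁻¹ * x * g * x⁻¹ ∈ Subgroup.center G := by
      convert h2 using 1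
      group
    have h3 := Subgroup.mem_center_iff.mp hu x⁻¹
    have h4 : x⁻¹ * g⁻¹ * x * g = (x⁻¹ * (g⁻¹ * x * g * x⁻¹)) * x := by group
    rw [h4, h3]
    have h5 : g⁻¹ * x * g * x⁻¹ * x⁻¹ * x = g⁻¹ * x * g * x⁻¹ := by group
    rw [h5]
    exact hu
  have hconj : ∀ g : G, g⁻¹ * x * g = x * (x⁻¹ * g⁻¹ * x * g) := fun g => by group
  -- the commutator homomorphism into the center
  let φc : G →* Subgroup.center G :=
  { toFun := fun g => ⟨x⁻¹ * g⁻¹ * x * g, hcZ g⟩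
    map_one' := by ext; simp
    map_mul' := by
      intro g w
      ext
      show x⁻¹ * (g * w)⁻¹ * x * (g * w) = (x⁻¹ * g⁻¹ * x * g) * (x⁻¹ * w⁻¹ * x * w)
      have hg := Subgroup.mem_center_iff.mp (hcZ g)
      calc x⁻¹ * (g * w)⁻¹ * x * (g * w)
          = x⁻¹ * (w⁻¹ * (g⁻¹ * x * g) * w) := by group
        _ = x⁻¹ * (w⁻¹ * (x * (x⁻¹ * g⁻¹ * x * g)) * w) := by rw [hconj g]
        _ = x⁻¹ * (w⁻¹ * x * ((x⁻¹ * g⁻¹ * x * g) * w)) := by group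
        _ = x⁻¹ * (w⁻¹ * x * (w * (x⁻¹ * g⁻¹ * x * g))) := by rw [← hg w]
        _ = (x⁻¹ * w⁻¹ * x * w) * (x⁻¹ * g⁻¹ * x * g) := by group
        _ = (x⁻¹ * g⁻¹ * x * g) * (x⁻¹ * w⁻¹ * x * w) := by rw [hg] }
  set K : Subgroup (Subgroup.center G) := φc.range with hK
  haveI : Group.FG K := Group.fg_range φc
  have htfK : ∀ g : K, g ≠ 1 → ¬ IsOfFinOrder g := by
    intro g hg hfin
    have hfin' : IsOfFinOrder (((g : Subgroup.center G) : G)) := by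
      have := ((Subgroup.center G).subtype.comp K.subtype).isOfFinOrder hfin
      simpa using this
    have hne : ((g : Subgroup.center G) : G) ≠ 1 := by
      intro h1
      exact hg (Subtype.ext (Subtype.ext h1))
    exact htf _ hne hfin'
  obtain ⟨y, hy⟩ : ∃ y : G, ¬ (y * x = x * y) := by
    by_contra hcon
    push_neg at hcon
    exact hxZ (Subgroup.mem_center_iff.mpr hcon)
  set zv : G := x⁻¹ * y⁻¹ * x * y with hzv
  have hzv1 : zv ≠ 1 := by
    intro h1
    have h1' : x⁻¹ * y⁻¹ * x * y = 1 := hzv ▸ h1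
    have h2 : y * x * (x⁻¹ * y⁻¹ * x * y) = x * y := by group
    rw [h1', mul_one] at h2
    exact hy h2
  set zK : K := ⟨φc y, ⟨y, rfl⟩⟩ with hzK
  have hzK1 : zK ≠ 1 := by
    intro h1
    exact hzv1 (congrArg (fun w : K => ((w : Subgroup.center G) : G)) h1)
  letI : CommGroup K := { (inferInstance : Group K) with
    mul_comm := fun a b => Subtype.ext (Subtype.ext ((Subgroup.mem_center_iff.mp a.1.2 b.1.1).symm)) }
  obtain ⟨q, hqprime, hqnep, hqpow⟩ := exists_prime_not_pow p K htfK zK hzK1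
  -- conjugates of x^q
  have hpowu : ∀ u : G, u⁻¹ * x ^ q * u = x ^ q * (x⁻¹ * u⁻¹ * x * u) ^ q := by
    intro u
    have hcomm : Commute x (x⁻¹ * u⁻¹ * x * u) :=
      (Subgroup.mem_center_iff.mp (hcZ u) x)
    calc u⁻¹ * x ^ q * u = (u⁻¹ * x * u) ^ q := (conj_pow' u x q).symm
        _ = (x * (x⁻¹ * u⁻¹ * x * u)) ^ q := by rw [hconj u]
        _ = x ^ q * (x⁻¹ * u⁻¹ * x * u) ^ q := hcomm.mul_pow q
  have hne : ¬ IsConj (x ^ q) (x ^ q * zv) := by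
    intro hcj
    obtain ⟨c, hc⟩ := isConj_iff.mp hcj
    have hc' : (c⁻¹)⁻¹ * x ^ q * c⁻¹ = x ^ q * zv := by rw [inv_inv]; exact hc
    have hcancel : (x⁻¹ * c⁻¹⁻¹ * x * c⁻¹) ^ q = zv := by
      have := (hpowu c⁻¹).symm.trans hc'
      exact mul_left_cancel this
    set wK : K := ⟨φc c⁻¹, ⟨c⁻¹, rfl⟩⟩ with hwK
    have hval : (((wK ^ q : K) : Subgroup.center G) : G) = ((zK : Subgroup.center G) : G) := by
      simp only [SubgroupClass.coe_pow]
      show (x⁻¹ * c⁻¹⁻¹ * x * c⁻¹) ^ q = x⁻¹ * y⁻¹ * x * y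
      exact hcancel
    exact hqpow wK (Subtype.ext (Subtype.ext hval))
  obtain ⟨X, _hGX, _hFX, hpg, φ, hφsurj, hφnc⟩ := h (x ^ q) (x ^ q * zv) hne
  apply hφnc
  obtain ⟨k, hk⟩ := hpg (φ zv)
  have hcopN : Nat.Coprime q (p ^ k) := ((Nat.coprime_primes hqprime hp).mpr hqnep).pow_right k
  have hcop : IsCoprime ((q : ℤ)) (((p ^ k : ℕ) : ℤ)) := Nat.Coprime.isCoprime hcopN
  obtain ⟨n, m, hnm⟩ := hcop
  have hyxz : y⁻¹ * x * y = x * zv := hconj y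
  have hzcomm : ∀ v, Commute zv v := fun v => (Subgroup.mem_center_iff.mp (hcZ y) v).symm
  have hgen := conj_zpow_formula hzcomm hyxz n
  have hGn : y ^ (-n) * x ^ q * y ^ n = x ^ q * zv ^ (n * (q : ℤ)) := by
    have e0 : (y ^ n)⁻¹ = y ^ (-n) := (zpow_neg y n).symm
    have e2 : ((y ^ n)⁻¹ * x * y ^ n) ^ q = (y ^ n)⁻¹ * x ^ q * y ^ n := conj_pow' (y ^ n) x q
    rw [e0] at e2
    rw [← e2, hgen]
    have hcx : Commute x (zv ^ n) := ((hzcomm x).zpow_left n).symm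
    rw [hcx.mul_pow q]
    congr 1
    rw [← zpow_natCast (zv ^ n) q, ← zpow_mul]
  rw [isConj_iff]
  refine ⟨φ (y ^ (-n)), ?_⟩
  have e3 : (φ (y ^ (-n)))⁻¹ = φ (y ^ n) := by
    rw [← map_inv]
    congr 1
    simp [zpow_neg]
  rw [e3, ← map_mul, ← map_mul, hGn, map_mul, map_mul]
  congr 1
  rw [map_zpow]
  have hpk1 : (φ zv) ^ (((p ^ k : ℕ)) : ℤ) = 1 := by rw [zpow_natCast, hk]
  have harith : n * (q : ℤ) = 1 - m * (((p ^ k : ℕ)) : ℤ) := by linarith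
  rw [harith, zpow_sub, zpow_one, mul_comm m, zpow_mul, hpk1, one_zpow, inv_one, mul_one]
end

section
/- (Proposition 4) Let p be a prime and let G be a group having a finite normal subgroup F such that the quotient group G/F is a finitely generated abelian group. If G is residually a finite p-group, then G is conjugacy F_p-separable. -/
/-- `G` is residually a finite `p`-group: for every non-identity `a ∈ G` there exists
a surjective homomorphism `φ` of `G` onto some finite `p`-group `X` with `φ a ≠ 1`. -/
def IsResiduallyFpGroup (p : ℕ) (G : Type) [Group G] : Prop :=
  ∀ a : G, a ≠ 1 →
    ∃ (X : Type) (_ : Group X) (_ : Fintype X),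
      IsPGroup p X ∧
      ∃ φ : G →* X, Function.Surjective φ ∧ φ a ≠ 1

/-- A finite product of `p`-groups is a `p`-group. -/
lemma isPGroup_pi_aux {p : ℕ} {ι : Type} [Fintype ι] {X : ι → Type}
    [∀ i, Group (X i)] (h : ∀ i, IsPGroup p (X i)) : IsPGroup p (∀ i, X i) := by
  intro g
  choose k hk using fun i => h i (g i)
  refine ⟨Finset.univ.sup k, ?_⟩
  funext i
  have hle : k i ≤ Finset.univ.sup k := Finset.le_sup (Finset.mem_univ i)
  have hpow : p ^ Finset.univ.sup k = p ^ k i * p ^ (Finset.univ.sup k - k i) := by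
    rw [← pow_add, Nat.add_sub_cancel' hle]
  have : (g ^ p ^ Finset.univ.sup k) i = (g i) ^ p ^ Finset.univ.sup k := rfl
  rw [this, hpow, pow_mul, hk i, one_pow, Pi.one_apply]

/-- (Proposition 4) Let `p` be a prime and `G` a group with a finite normal subgroup
`F` such that `G ⧸ F` is a finitely generated abelian group. If `G` is residually a
finite `p`-group, then `G` is conjugacy `F_p`-separable. -/
theorem conjFpSeparable_of_residuallyFp
    (p : ℕ) (hp : p.Prime) (G : Type) [Group G]
    (F : Subgroup G) [F.Normal] (hF : Finite F)
    (hfg : Group.FG (G ⧸ F)) (hab : ∀ x y : G ⧸ F, x * y = y * x)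
    (hres : IsResiduallyFpGroup p G) :
    IsConjFpSeparable p G := by
  intro a b hnc
  classical
  -- the conjugacy class of `b`
  set T : Set G := {c : G | IsConj b c} with hTdef
  -- `T` is finite, being contained in the coset `F * b`
  have hTfin : T.Finite := by
    apply Set.Finite.subset (((F : Set G).toFinite).image (· * b))
    rintro c hc
    obtain ⟨u, rfl⟩ := isConj_iff.mp hc
    refine ⟨u * b * u⁻¹ * b⁻¹, ?_, by group⟩
    have h1 : ((u * b * u⁻¹ * b⁻¹ : G) : G ⧸ F) = 1 := by
      show (u : G ⧸ F) * (b : G ⧸ F) * (u : G ⧸ F)⁻¹ * (b : G ⧸ F)⁻¹ = 1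
      rw [hab (u : G ⧸ F) (b : G ⧸ F)]
      group
    exact (QuotientGroup.eq_one_iff _).mp h1
  have haT : a ∉ T := fun h => hnc (IsConj.symm h)
  haveI : Fintype T := hTfin.fintype
  -- for each element of the conjugacy class, separate it from `a`
  have key : ∀ c : T, ∃ (X : Type) (_ : Group X) (_ : Fintype X),
      IsPGroup p X ∧ ∃ φ : G →* X, Function.Surjective φ ∧ φ a ≠ φ (c : G) := by
    rintro ⟨c, hc⟩
    have hne : a * c⁻¹ ≠ 1 := by
      intro h
      exact haT (by simpa [mul_inv_eq_one.mp h] using hc)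
    obtain ⟨X, _, _, hpX, φ, hsurj, hφ⟩ := hres _ hne
    refine ⟨X, ‹_›, ‹_›, hpX, φ, hsurj, fun h => hφ ?_⟩
    rw [map_mul, map_inv, h, mul_inv_cancel]
  choose X gX fX hpX φs hsurj hne using key
  letI : ∀ c : T, Group (X c) := gX
  letI : ∀ c : T, Fintype (X c) := fX
  -- the product map
  let Φ : G →* ∀ c : T, X c := Pi.monoidHom φs
  refine ⟨Φ.range, inferInstance, Fintype.ofFinite _, ?_, Φ.rangeRestrict,
    Φ.rangeRestrict_surjective, ?_⟩
  · exact (isPGroup_pi_aux hpX).to_subgroup Φ.range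
  · intro hconj
    obtain ⟨x, hx⟩ := isConj_iff.mp hconj
    obtain ⟨g, rfl⟩ := Φ.rangeRestrict_surjective x
    have h1 : Φ (g * a * g⁻¹) = Φ b := by
      have := congrArg (Subtype.val) hx
      simpa [map_mul, map_inv] using this
    have h2 : Φ a = Φ (g⁻¹ * b * g) := by
      have := congrArg (fun y => (Φ g)⁻¹ * y * Φ g) h1
      simpa [map_mul, map_inv, mul_assoc] using this
    have hcT : (g⁻¹ * b * g) ∈ T := isConj_iff.mpr ⟨g⁻¹, by group⟩
    have h3 : φs ⟨_, hcT⟩ a = φs ⟨_, hcT⟩ (g⁻¹ * b * g) := congrFun h2 ⟨_, hcT⟩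
    exact hne ⟨_, hcT⟩ h3
end

section
/- (Proposition 1, specialized to the class of finite p-groups) Let p be a prime, G a group and N a normal subgroup of G. The quotient group G/N is conjugacy F_p-separable if and only if every coset of G modulo N is conjugacy F_p-separable in G. -/
/-- A subset `M` of a group `G` is conjugacy `F_p`-separable in `G`: whenever `a ∈ G`
is not conjugate in `G` to any element of `M`, there exists a surjective homomorphism
`φ` of `G` onto some finite `p`-group `X` such that `φ a` is not conjugate in `X` to
any element of the image `φ '' M`. -/
def SetIsConjFpSeparable (p : ℕ) {G : Type} [Group G] (M : Set G) : Prop :=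
  ∀ a : G, (∀ m ∈ M, ¬ IsConj a m) →
    ∃ (X : Type) (_ : Group X) (_ : Fintype X),
      IsPGroup p X ∧
      ∃ φ : G →* X, Function.Surjective φ ∧ ∀ x ∈ φ '' M, ¬ IsConj (φ a) x

/-- (Proposition 1 for the class of finite `p`-groups) Let `p` be a prime, `G` a group
and `N` a normal subgroup of `G`. The quotient `G ⧸ N` is conjugacy `F_p`-separable
iff every coset `b * N` of `G` modulo `N` is conjugacy `F_p`-separable in `G`. -/
theorem quotient_conjFpSeparable_iff_cosets_setConjFpSeparable
    (p : ℕ) (hp : p.Prime) (G : Type) [Group G] (N : Subgroup G) [N.Normal] :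
    IsConjFpSeparable p (G ⧸ N) ↔
      ∀ b : G, SetIsConjFpSeparable p ((fun n => b * n) '' (N : Set G)) := by
  constructor
  · intro h b a ha
    have hnc : ¬ IsConj (QuotientGroup.mk a : G ⧸ N) (QuotientGroup.mk b) := by
      intro hc
      rw [isConj_iff] at hc
      obtain ⟨c, hc⟩ := hc
      obtain ⟨g, rfl⟩ := QuotientGroup.mk_surjective c
      have h1 : (QuotientGroup.mk (g * a * g⁻¹) : G ⧸ N) = QuotientGroup.mk b := by
        simpa using hc
      rw [QuotientGroup.eq] at h1
      have h1' : b⁻¹ * (g * a * g⁻¹) ∈ N := by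
        have h2 := N.inv_mem h1
        simpa [mul_inv_rev, mul_assoc] using h2
      refine ha (b * (b⁻¹ * (g * a * g⁻¹))) ⟨b⁻¹ * (g * a * g⁻¹), h1', rfl⟩ ?_
      rw [isConj_iff]
      exact ⟨g, by group⟩
    obtain ⟨X, _, _, hX, φ, hsurj, hconj⟩ := h _ _ hnc
    refine ⟨X, inferInstance, inferInstance, hX,
      φ.comp (QuotientGroup.mk' N), hsurj.comp (QuotientGroup.mk'_surjective N), ?_⟩
    rintro x ⟨m, ⟨n, hn, rfl⟩, rfl⟩ hc
    apply hconj
    have h2 : (QuotientGroup.mk (b * n) : G ⧸ N) = QuotientGroup.mk b := by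
      rw [QuotientGroup.eq]
      simpa using N.inv_mem hn
    simpa [MonoidHom.comp_apply, QuotientGroup.mk'_apply, h2] using hc
  · intro h a b hab
    obtain ⟨a, rfl⟩ := QuotientGroup.mk_surjective a
    obtain ⟨b, rfl⟩ := QuotientGroup.mk_surjective b
    have ha : ∀ m ∈ (fun n => b * n) '' (N : Set G), ¬ IsConj a m := by
      rintro m ⟨n, hn, rfl⟩ hc
      apply hab
      have h1 : IsConj (QuotientGroup.mk a : G ⧸ N) (QuotientGroup.mk (b * n)) :=
        (QuotientGroup.mk' N).map_isConj hc
      have h2 : (QuotientGroup.mk (b * n) : G ⧸ N) = QuotientGroup.mk b := by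
        rw [QuotientGroup.eq]
        simpa using N.inv_mem hn
      rwa [h2] at h1
    obtain ⟨X, _, _, hX, ψ, hsurj, hψ⟩ := h b a ha
    let K : Subgroup X := N.map ψ
    haveI : K.Normal := Subgroup.Normal.map inferInstance ψ hsurj
    have hker : ∀ n ∈ N, ((QuotientGroup.mk' K).comp ψ) n = 1 := by
      intro n hn
      simp only [MonoidHom.comp_apply, QuotientGroup.mk'_apply]
      rw [QuotientGroup.eq_one_iff]
      exact ⟨n, hn, rfl⟩
    let φ : G ⧸ N →* X ⧸ K := QuotientGroup.lift N ((QuotientGroup.mk' K).comp ψ)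
      (fun n hn => hker n hn)
    haveI : Finite (X ⧸ K) := Quotient.finite _
    refine ⟨X ⧸ K, inferInstance, Fintype.ofFinite _, hX.to_quotient K, φ, ?_, ?_⟩
    · intro x
      obtain ⟨y, rfl⟩ := QuotientGroup.mk_surjective x
      obtain ⟨g, rfl⟩ := hsurj y
      exact ⟨QuotientGroup.mk g, rfl⟩
    · intro hc
      rw [isConj_iff] at hc
      obtain ⟨c, hc⟩ := hc
      obtain ⟨x, rfl⟩ := QuotientGroup.mk_surjective c
      have hc' : (QuotientGroup.mk (x * ψ a * x⁻¹) : X ⧸ K) = QuotientGroup.mk (ψ b) := by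
        exact hc
      rw [QuotientGroup.eq] at hc'
      obtain ⟨n, hn, hn'⟩ := hc'
      apply hψ (ψ (b * n⁻¹)) ⟨b * n⁻¹, ⟨n⁻¹, N.inv_mem hn, rfl⟩, rfl⟩
      rw [isConj_iff]
      refine ⟨x, ?_⟩
      rw [map_mul, map_inv, hn']
      group
end

section
/- (Proposition 2, specialized to the class of finite p-groups) Let p be a prime and let G be a conjugacy F_p-separable group. Then for every finite normal subgroup N of G, the quotient group G/N is conjugacy F_p-separable. -/
/-- A finite product of `p`-groups is a `p`-group. -/
lemma isPGroup_pi {p : ℕ} {ι : Type} [Finite ι] (X : ι → Type) [∀ i, Group (X i)]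
    (hX : ∀ i, IsPGroup p (X i)) : IsPGroup p (∀ i, X i) := by
  cases nonempty_fintype ι
  intro g
  choose k hk using fun i => hX i (g i)
  refine ⟨Finset.univ.sup k, ?_⟩
  funext i
  have hle : k i ≤ Finset.univ.sup k := Finset.le_sup (Finset.mem_univ i)
  have : (g i) ^ p ^ Finset.univ.sup k = 1 := by
    rw [← Nat.add_sub_cancel' hle, pow_add, pow_mul, hk i, one_pow]
  simpa using this

/-- (Proposition 2 for the class of finite `p`-groups) Let `p` be a prime and `G` a
conjugacy `F_p`-separable group. Then for every finite normal subgroup `N` of `G`,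
the quotient `G ⧸ N` is conjugacy `F_p`-separable. -/
theorem quotient_conjFpSeparable_of_finite_normal
    (p : ℕ) (hp : p.Prime) (G : Type) [Group G] (h : IsConjFpSeparable p G)
    (N : Subgroup G) [N.Normal] (hN : Finite N) :
    IsConjFpSeparable p (G ⧸ N) := by
  intro a b hab
  obtain ⟨a', rfl⟩ := QuotientGroup.mk_surjective a
  obtain ⟨b', rfl⟩ := QuotientGroup.mk_surjective b
  -- For each n ∈ N, a' is not conjugate to b' * n in G.
  have key : ∀ n : N, ¬ IsConj a' (b' * (n : G)) := by
    intro n hc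
    apply hab
    have := (QuotientGroup.mk' N).map_isConj hc
    simpa [QuotientGroup.mk'_apply, QuotientGroup.eq_iff_div_mem] using this
  choose X gX fX hpX φ hsurj hnc using fun n : N => h a' (b' * (n : G)) (key n)
  letI : ∀ n : N, Group (X n) := gX
  letI : ∀ n : N, Fintype (X n) := fX
  -- Product map
  let Φ : G →* ∀ n : N, X n := MonoidHom.mk' (fun g n => φ n g) (by
    intro x y; funext n; simp)
  let K := Φ.range
  let ψ : G →* K := Φ.rangeRestrict
  have hψ : Function.Surjective ψ := Φ.rangeRestrict_surjective
  let M : Subgroup K := N.map ψ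
  haveI : M.Normal := Subgroup.Normal.map inferInstance ψ hψ
  haveI : Fintype K := by
    haveI : Fintype N := Fintype.ofFinite N
    classical exact Fintype.ofFinite K
  haveI : Fintype (K ⧸ M) := by classical exact Fintype.ofFinite _
  let π : G →* (K ⧸ M) := (QuotientGroup.mk' M).comp ψ
  have hπ : Function.Surjective π := (QuotientGroup.mk'_surjective M).comp hψ
  have hker : N ≤ π.ker := by
    intro x hx
    simp only [π, MonoidHom.mem_ker, MonoidHom.comp_apply, QuotientGroup.mk'_apply,
      QuotientGroup.eq_one_iff]
    exact ⟨x, hx, rfl⟩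
  refine ⟨K ⧸ M, inferInstance, inferInstance,
    IsPGroup.to_quotient (IsPGroup.to_subgroup (isPGroup_pi X hpX) K) M,
    QuotientGroup.lift N π hker, ?_, ?_⟩
  · intro y
    obtain ⟨g, hg⟩ := hπ y
    exact ⟨QuotientGroup.mk g, hg⟩
  · -- suppose π a' and π b' are conjugate in K ⧸ M
    intro hc
    rw [isConj_iff] at hc
    obtain ⟨c, hc⟩ := hc
    obtain ⟨g, hg⟩ := hπ c
    have hc' : π (g * a' * g⁻¹) = π b' := by
      have h1 : (QuotientGroup.lift N π hker) ((a' : G ⧸ N)) = π a' := rfl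
      have h2 : (QuotientGroup.lift N π hker) ((b' : G ⧸ N)) = π b' := rfl
      rw [h1, h2, ← hg] at hc
      simpa [map_mul, map_inv] using hc
    have hmem : (ψ (g * a' * g⁻¹))⁻¹ * ψ b' ∈ M := QuotientGroup.eq.mp hc'
    obtain ⟨n, hn, hψn⟩ := hmem
    -- Φ (g * a' * g⁻¹) = Φ (b' * n⁻¹)
    have hΦ : Φ ((g * a' * g⁻¹)⁻¹ * b') = Φ n := by
      have := congrArg Subtype.val hψn
      simpa [ψ, K, MonoidHom.coe_rangeRestrict, map_mul, map_inv] using this.symm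
    set i : N := ⟨n, hn⟩⁻¹ with hi
    have hcomp : φ i ((g * a' * g⁻¹)⁻¹ * b') = φ i n := congrFun hΦ i
    apply hnc i
    rw [isConj_iff]
    refine ⟨φ i g, ?_⟩
    have : φ i (b' * (i : G)) = φ i (g * a' * g⁻¹) := by
      have hni : (i : G) = n⁻¹ := by simp [hi]
      calc φ i (b' * (i : G)) = φ i b' * (φ i n)⁻¹ := by rw [hni]; simp [map_mul, map_inv]
        _ = φ i b' * (φ i ((g * a' * g⁻¹)⁻¹ * b'))⁻¹ := by rw [hcomp]
        _ = φ i (g * a' * g⁻¹) := by simp only [map_mul, map_inv]; group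
    rw [this]
    simp [map_mul, map_inv]
end

section
/- Let p be a prime and let G be a group that is residually a finite p-group. Then for every finite normal subgroup N of G, the quotient group G/N is residually a finite p-group. -/
open scoped Pointwise


/-- Let `p` be a prime and `G` a group that is residually a finite `p`-group. Then for
every finite normal subgroup `N` of `G`, the quotient `G ⧸ N` is residually a finite
`p`-group. -/
theorem quotient_residuallyFp_of_finite_normal
    (p : ℕ) (hp : p.Prime) (G : Type) [Group G] (h : IsResiduallyFpGroup p G)
    (N : Subgroup G) [N.Normal] (hN : Finite N) :
    IsResiduallyFpGroup p (G ⧸ N) := by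
  classical
  intro abar habar
  obtain ⟨a, rfl⟩ := QuotientGroup.mk_surjective abar
  have haN : a ∉ N := by
    intro haN
    exact habar ((QuotientGroup.eq_one_iff a).2 haN)
  haveI : Fintype N := Fintype.ofFinite N
  -- for each n ∈ N, the element a * n⁻¹ is nontrivial
  have hane : ∀ n : N, a * (n : G)⁻¹ ≠ 1 := by
    intro n hn
    apply haN
    have : a = (n : G) := by
      have := mul_inv_eq_one.1 hn
      exact this
    rw [this]; exact n.2
  choose X gX fX hXp φ hφsurj hφne using fun n : N => h (a * (n : G)⁻¹) (hane n)
  -- combined homomorphism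
  let Φ : G →* ∀ n : N, X n := Pi.monoidHom φ
  let L : Subgroup G := Φ.ker ⊔ N
  haveI hLnorm : L.Normal := Subgroup.sup_normal Φ.ker N
  have hNL : N ≤ L := le_sup_right
  have hkerL : Φ.ker ≤ L := le_sup_left
  -- a ∉ L
  have haL : a ∉ L := by
    intro haL
    have : a ∈ (Φ.ker : Set G) * (N : Set G) := by
      rw [← Subgroup.mul_normal]
      exact haL
    obtain ⟨k, hk, n, hn, rfl⟩ := this
    apply hφne ⟨n, hn⟩
    have : k * n * (n : G)⁻¹ = k := by group
    rw [this]
    have hk' : φ ⟨n, hn⟩ k = 1 := by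
      have := MonoidHom.mem_ker.1 hk
      have := congrFun this ⟨n, hn⟩
      exact this
    exact hk'
  -- the quotient G ⧸ L is finite
  haveI : Finite (G ⧸ Φ.ker) := Finite.of_equiv _ (QuotientGroup.quotientKerEquivRange Φ).symm.toEquiv
  have hsurj1 : Function.Surjective (QuotientGroup.map Φ.ker L (MonoidHom.id G) hkerL) := by
    intro x
    obtain ⟨b, rfl⟩ := QuotientGroup.mk_surjective x
    exact ⟨QuotientGroup.mk b, rfl⟩
  haveI : Finite (G ⧸ L) := Finite.of_surjective _ hsurj1
  -- G ⧸ L is a p-group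
  have hpL : IsPGroup p (G ⧸ L) := by
    intro bbar
    obtain ⟨b, rfl⟩ := QuotientGroup.mk_surjective bbar
    have : ∀ n : N, ∃ k : ℕ, (φ n b) ^ p ^ k = 1 := fun n => hXp n (φ n b)
    choose k hk using this
    refine ⟨Finset.univ.sup k, ?_⟩
    have hb : b ^ p ^ Finset.univ.sup k ∈ Φ.ker := by
      rw [MonoidHom.mem_ker]
      funext n
      have hle : k n ≤ Finset.univ.sup k := Finset.le_sup (Finset.mem_univ n)
      have : (φ n b) ^ p ^ Finset.univ.sup k = 1 := by
        rw [← Nat.add_sub_cancel' hle, pow_add, pow_mul, hk n, one_pow]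
      calc Φ (b ^ p ^ Finset.univ.sup k) n = (φ n b) ^ p ^ Finset.univ.sup k := by
            simp [Φ, Pi.monoidHom]
        _ = 1 := this
    have : ((QuotientGroup.mk b : G ⧸ L)) ^ p ^ Finset.univ.sup k
        = QuotientGroup.mk (b ^ p ^ Finset.univ.sup k) := rfl
    rw [this, QuotientGroup.eq_one_iff]
    exact hkerL hb
  refine ⟨G ⧸ L, inferInstance, Fintype.ofFinite _, hpL,
    QuotientGroup.map N L (MonoidHom.id G) hNL, ?_, ?_⟩
  · intro x
    obtain ⟨b, rfl⟩ := QuotientGroup.mk_surjective x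
    exact ⟨QuotientGroup.mk b, rfl⟩
  · intro hcontra
    have : (QuotientGroup.mk a : G ⧸ L) = 1 := hcontra
    exact haL ((QuotientGroup.eq_one_iff a).1 this)
end

section
/- Let G be a group, let a, b, c ∈ G with c in the center of G, c ≠ 1, and b⁻¹ab = ac. Suppose that every conjugate of a lies in the coset a·Z(G) (i.e., for every g ∈ G there is z ∈ Z(G) with g⁻¹ag = az), and suppose that q and n are such that the equation x^(q^n) = c has no solution x in the center Z(G). Then the elements a^(q^n) and a^(q^n)·c are not conjugate in G. -/
/-- Let `G` be a group, `a b c ∈ G` with `c` central, `c ≠ 1` and `b⁻¹ * a * b = a * c`.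
Suppose every conjugate of `a` lies in the coset `a • Z(G)`, and that `x ^ q ^ n = c`
has no solution `x` in the center `Z(G)`. Then `a ^ q ^ n` and `a ^ q ^ n * c` are not
conjugate in `G`. -/
theorem not_isConj_pow_of_not_pow_eq_center
    (G : Type) [Group G] (a b c : G)
    (hc : c ∈ Subgroup.center G) (hc1 : c ≠ 1) (hb : b⁻¹ * a * b = a * c)
    (ha : ∀ g : G, ∃ z ∈ Subgroup.center G, g⁻¹ * a * g = a * z)
    (q n : ℕ) (hqc : ¬ ∃ x ∈ Subgroup.center G, x ^ q ^ n = c) :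
    ¬ IsConj (a ^ q ^ n) (a ^ q ^ n * c) := by
  intro h
  obtain ⟨g, hg⟩ := isConj_iff.mp h
  obtain ⟨z, hz, hza⟩ := ha g⁻¹
  apply hqc
  refine ⟨z, hz, ?_⟩
  have hcomm : Commute a z := Subgroup.mem_center_iff.mp hz a
  have h1 : g * a ^ q ^ n * g⁻¹ = (a * z) ^ q ^ n := by
    rw [← hza, inv_inv, ← conj_pow]
  rw [hcomm.mul_pow, hg] at h1
  exact (mul_left_cancel h1).symm
end

section
/- Let p and q be distinct primes, n ≥ 1 an integer, and let G be a group with elements a, b, c such that c lies in the center of G and b⁻¹ab = ac. Then for every homomorphism ψ from G to a finite p-group P, the images ψ(a^(q^n)) and ψ(a^(q^n)·c) are conjugate in P. -/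
/-- Let `p` and `q` be distinct primes, `n ≥ 1`, and let `G` be a group with elements
`a b c` such that `c` is central and `b⁻¹ * a * b = a * c`. Then for every homomorphism
`ψ` of `G` to a finite `p`-group `P`, the images `ψ (a ^ q ^ n)` and `ψ (a ^ q ^ n * c)`
are conjugate in `P`. -/
theorem isConj_image_pow_in_finite_pGroup
    (p q : ℕ) (hp : p.Prime) (hq : q.Prime) (hpq : p ≠ q) (n : ℕ) (hn : 1 ≤ n)
    (G : Type) [Group G] (a b c : G)
    (hc : c ∈ Subgroup.center G) (hb : b⁻¹ * a * b = a * c)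
    (P : Type) [Group P] [Fintype P] (hP : IsPGroup p P) (ψ : G →* P) :
    IsConj (ψ (a ^ q ^ n)) (ψ (a ^ q ^ n * c)) := by
  have hac : Commute a c := (Subgroup.mem_center_iff.mp hc) a
  have hbc : Commute b c := (Subgroup.mem_center_iff.mp hc) b
  have hconj1 : b⁻¹ * a ^ q ^ n * b = a ^ q ^ n * c ^ q ^ n := by
    have h1 : b⁻¹ * a ^ q ^ n * b = (b⁻¹ * a * b) ^ q ^ n := by
      have := conj_pow (i := q ^ n) (a := b⁻¹) (b := a)
      simpa using this.symm
    rw [h1, hb, hac.mul_pow]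
  have key : ∀ k : ℕ, (b ^ k)⁻¹ * a ^ q ^ n * b ^ k = a ^ q ^ n * c ^ (k * q ^ n) := by
    intro k
    induction k with
    | zero => simp
    | succ k ih =>
      have h2 : (b ^ (k + 1))⁻¹ * a ^ q ^ n * b ^ (k + 1)
          = b⁻¹ * ((b ^ k)⁻¹ * a ^ q ^ n * b ^ k) * b := by
        rw [pow_succ]; group
      have h3 : Commute b (c ^ (k * q ^ n)) := hbc.pow_right _
      rw [h2, ih]
      calc b⁻¹ * (a ^ q ^ n * c ^ (k * q ^ n)) * b
          = (b⁻¹ * a ^ q ^ n * b) * c ^ (k * q ^ n) := by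
            simp only [mul_assoc]
            rw [h3.eq]
        _ = a ^ q ^ n * c ^ ((k + 1) * q ^ n) := by
            rw [hconj1, mul_assoc, ← pow_add]
            ring_nf
  -- order of ψ c is a power of p, hence coprime to q ^ n
  obtain ⟨s, hs⟩ := hP (ψ c)
  have hdvd : orderOf (ψ c) ∣ p ^ s := orderOf_dvd_of_pow_eq_one hs
  have hcop : Nat.Coprime (q ^ n) (orderOf (ψ c)) :=
    Nat.Coprime.coprime_dvd_right hdvd
      (Nat.Coprime.pow n s (((Nat.coprime_primes hq hp).mpr (Ne.symm hpq))))
  rcases eq_or_lt_of_le (Nat.succ_le_of_lt (orderOf_pos (ψ c))) with h1 | h1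
  · -- orderOf (ψ c) = 1, so ψ c = 1
    have : ψ c = 1 := orderOf_eq_one_iff.mp h1.symm
    rw [map_mul, this, mul_one]
  · obtain ⟨k, -, hk⟩ := Nat.exists_mul_mod_eq_one_of_coprime hcop h1
    have hmod : k * q ^ n ≡ 1 [MOD orderOf (ψ c)] := by
      unfold Nat.ModEq
      rw [Nat.mul_comm k, hk, Nat.one_mod_eq_one.mpr (by omega)]
    have hpow : ψ c ^ (k * q ^ n) = ψ c := by
      have h2 : ψ c ^ (k * q ^ n) = ψ c ^ 1 := pow_eq_pow_iff_modEq.mpr hmod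
      simpa using h2
    rw [isConj_iff]
    refine ⟨(ψ (b ^ k))⁻¹, ?_⟩
    have hkey := congrArg ψ (key k)
    simp only [map_mul, map_inv, map_pow] at hkey ⊢
    rw [inv_inv, hkey, hpow]
end

section
/- Let G be a group with a normal subgroup F such that the quotient group G/F is abelian, let N be a normal subgroup of G with N ∩ F = 1, and let a ∈ G and f ∈ F with b = af. If a and b are not conjugate in G, then the cosets aN and bN are not conjugate in the quotient group G/N. -/
/-- Let `G` be a group with a normal subgroup `F` such that `G ⧸ F` is abelian, let `N`
be a normal subgroup of `G` with `N ⊓ F = ⊥`, and let `a ∈ G`, `f ∈ F`, `b = a * f`.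
If `a` and `b` are not conjugate in `G`, then the cosets of `a` and `b` are not
conjugate in `G ⧸ N`. -/
theorem not_isConj_quotient_of_not_isConj
    (G : Type) [Group G] (F N : Subgroup G) [F.Normal] [N.Normal]
    (hab : ∀ x y : G ⧸ F, x * y = y * x) (hNF : N ⊓ F = ⊥)
    (a f b : G) (hf : f ∈ F) (hb : b = a * f)
    (h : ¬ IsConj a b) :
    ¬ IsConj (QuotientGroup.mk a : G ⧸ N) (QuotientGroup.mk b : G ⧸ N) := by
  intro hc
  apply h
  rw [isConj_iff] at hc
  obtain ⟨c, hc⟩ := hc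
  obtain ⟨g, rfl⟩ := QuotientGroup.mk_surjective (s := N) c
  have hc' : ((g * a * g⁻¹ : G) : G ⧸ N) = ((b : G) : G ⧸ N) := by
    simpa using hc
  have hn : (g * a * g⁻¹)⁻¹ * b ∈ N := QuotientGroup.eq.mp hc'
  have hfa : ((f : G) : G ⧸ F) = 1 := (QuotientGroup.eq_one_iff f).mpr hf
  have hnF : (g * a * g⁻¹)⁻¹ * b ∈ F := by
    apply (QuotientGroup.eq_one_iff _).mp
    letI : CommGroup (G ⧸ F) := { (inferInstance : Group (G ⧸ F)) with mul_comm := hab }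
    rw [hb]
    simp only [QuotientGroup.mk_mul, QuotientGroup.mk_inv, hfa]
    rw [mul_comm ((g : G ⧸ F)) ((a : G ⧸ F))]
    group
  have h1 : (g * a * g⁻¹)⁻¹ * b = 1 := by
    have := hNF ▸ Subgroup.mem_inf.mpr ⟨hn, hnF⟩
    simpa using this
  exact isConj_iff.mpr ⟨g, by rw [inv_mul_eq_one] at h1; exact h1⟩
end
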